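/- arXiv:2510.15431 — 5 statements merged into one kernel-verified Lean document; each statement's English description precedes it below -/
import Mathlib

section
/- Let W be continuous, nonnegative, with zeros exactly {a,b}, a < b, and 1/√W locally integrable. For α ∈ [a,b] define Ψ_α(x) = ∫_α^x W(s)^{-1/2} ds and T^(α) = Ψ_α(b). Then the function z_α defined by z_α(t) = Ψ_α^{-1}(t) for t ∈ [0, T^(α)] and z_α(t) = b for t > T^(α) is C¹ on [0,∞), takes values in [a,b], satisfies z_α(0) = α and z_α'(t) = √(W(z_α(t))) for every t ≥ 0. -/
open Real Set Filter Topology MeasureTheory intervalIntegral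

theorem cauchy_problem_solution_exists (W : ℝ → ℝ) (a b α : ℝ)
    (hab : a < b) (hα : α ∈ Icc a b)
    (hWc : Continuous W) (hWnn : ∀ x, 0 ≤ W x)
    (hzeros : ∀ x, W x = 0 ↔ x = a ∨ x = b)
    (hint : IntervalIntegrable (fun s => (Real.sqrt (W s))⁻¹) volume a b)
    (hmono : StrictMonoOn (fun x => ∫ s in α..x, (Real.sqrt (W s))⁻¹) (Icc α b)) :
    ∃ z : ℝ → ℝ,
      (∀ t ∈ Ici (0:ℝ), z t ∈ Icc a b) ∧
      z 0 = α ∧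
      ContDiffOn ℝ 1 z (Ici 0) ∧
      (∀ t ∈ Ici (0:ℝ), HasDerivWithinAt z (Real.sqrt (W (z t))) (Ici 0) t) ∧
      (∀ t ∈ Icc (0:ℝ) (∫ s in α..b, (Real.sqrt (W s))⁻¹),
        (∫ s in α..(z t), (Real.sqrt (W s))⁻¹) = t) ∧
      (∀ t, (∫ s in α..b, (Real.sqrt (W s))⁻¹) < t → z t = b) := by
  classical
  obtain ⟨haα, hαb⟩ := hα
  set f : ℝ → ℝ := fun s => (Real.sqrt (W s))⁻¹ with hfdef
  set Ψ : ℝ → ℝ := fun x => ∫ s in α..x, f s with hΨdef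
  have hΨap : ∀ x, Ψ x = ∫ s in α..x, f s := fun x => rfl
  -- basic positivity facts
  have hWpos : ∀ x, a < x → x < b → 0 < W x := by
    intro x h1 h2
    rcases lt_or_eq_of_le (hWnn x) with h | h
    · exact h
    · rcases (hzeros x).mp h.symm with rfl | rfl
      · exact absurd h1 (lt_irrefl _)
      · exact absurd h2 (lt_irrefl _)
  have hfnn : ∀ x, 0 ≤ f x := fun x => inv_nonneg.mpr (Real.sqrt_nonneg _)
  have hfpos : ∀ x, a < x → x < b → 0 < f x := fun x h1 h2 =>
    inv_pos.mpr (Real.sqrt_pos.mpr (hWpos x h1 h2))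
  have hαmem : α ∈ Icc a b := ⟨haα, hαb⟩
  have hamem : a ∈ Icc a b := ⟨le_refl a, hab.le⟩
  have hbmem : b ∈ Icc a b := ⟨hab.le, le_refl b⟩
  have hfint : ∀ u v, u ∈ Icc a b → v ∈ Icc a b → IntervalIntegrable f volume u v := by
    intro u v hu hv
    refine hint.mono_set ?_
    rw [uIcc_of_le hab.le]
    exact uIcc_subset_Icc hu hv
  have hΨadd : ∀ u v, u ∈ Icc a b → v ∈ Icc a b → Ψ v - Ψ u = ∫ s in u..v, f s := by
    intro u v hu hv
    have h := integral_add_adjacent_intervals (hfint α u hαmem hu) (hfint u v hu hv)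
    simp only [hΨap]
    linarith [h]
  -- lower bound for integrals of f
  have hint_lb : ∀ c u v, u ∈ Icc a b → v ∈ Icc a b → u ≤ v →
      (∀ x, u < x → x < v → c ≤ f x) → c * (v - u) ≤ ∫ s in u..v, f s := by
    intro c u v hu hv huv hbound
    have hmono' : (∫ s in u..v, (fun _ => c) s) ≤ ∫ s in u..v, f s := by
      refine integral_mono_ae_restrict huv intervalIntegrable_const (hfint u v hu hv) ?_
      rw [Filter.EventuallyLE, ae_restrict_iff' measurableSet_Icc, ae_iff]
      refine measure_mono_null (fun x hx => ?_) (((Set.finite_singleton v).insert u).measure_zero volume)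
      simp only [mem_setOf_eq, not_forall] at hx
      obtain ⟨hxm, hxb⟩ := hx
      rcases eq_or_lt_of_le hxm.1 with h | h
      · exact Or.inl h.symm
      rcases eq_or_lt_of_le hxm.2 with h' | h'
      · exact Or.inr h'
      · exact absurd (hbound x h h') hxb
    calc c * (v - u) = ∫ _ in u..v, c := by
          rw [intervalIntegral.integral_const, smul_eq_mul, mul_comm]
      _ ≤ ∫ s in u..v, f s := hmono'
  -- strict monotonicity of Ψ
  have hpsi_lt : ∀ u v, u ∈ Icc a b → v ∈ Icc a b → u < v → Ψ u < Ψ v := by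
    intro u v hu hv huv
    have h1 : 0 < ∫ s in u..v, f s :=
      intervalIntegral_pos_of_pos_on (hfint u v hu hv)
        (fun x hx => hfpos x (lt_of_le_of_lt hu.1 hx.1) (lt_of_lt_of_le hx.2 hv.2)) huv
    have h2 := hΨadd u v hu hv
    linarith
  have hpsi_le : ∀ u v, u ∈ Icc a b → v ∈ Icc a b → u ≤ v → Ψ u ≤ Ψ v := by
    intro u v hu hv huv
    rcases eq_or_lt_of_le huv with rfl | h
    · exact le_refl _
    · exact (hpsi_lt u v hu hv h).le
  have hΨα : Ψ α = 0 := intervalIntegral.integral_same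
  have hA0 : Ψ a ≤ 0 := hΨα ▸ hpsi_le a α hamem hαmem haα
  have hT0 : 0 ≤ Ψ b := hΨα ▸ hpsi_le α b hαmem hbmem hαb
  -- uniform upper bound on sqrt ∘ W
  obtain ⟨xm, hxm, hxmax⟩ :=
    isCompact_Icc.exists_isMaxOn (nonempty_Icc.mpr hab.le) (hWc.continuousOn (s := Icc a b))
  set M : ℝ := Real.sqrt (W xm) + 1 with hMdef
  have hM : 0 < M := by positivity
  have hMb : ∀ x, x ∈ Icc a b → Real.sqrt (W x) ≤ M := by
    intro x hx
    have := hxmax hx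
    have h2 : Real.sqrt (W x) ≤ Real.sqrt (W xm) := Real.sqrt_le_sqrt this
    linarith
  have hflb : ∀ x, a < x → x < b → M⁻¹ ≤ f x := by
    intro x h1 h2
    exact inv_anti₀ (Real.sqrt_pos.mpr (hWpos x h1 h2)) (hMb x ⟨h1.le, h2.le⟩)
  have hlen : ∀ u v, u ∈ Icc a b → v ∈ Icc a b → u ≤ v → v - u ≤ M * (Ψ v - Ψ u) := by
    intro u v hu hv huv
    have h1 : M⁻¹ * (v - u) ≤ ∫ s in u..v, f s :=
      hint_lb M⁻¹ u v hu hv huv (fun x hx1 hx2 =>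
        hflb x (lt_of_le_of_lt hu.1 hx1) (lt_of_lt_of_le hx2 hv.2))
    have h2 := hΨadd u v hu hv
    have h3 : M⁻¹ * (v - u) ≤ Ψ v - Ψ u := by linarith
    calc v - u = M * (M⁻¹ * (v - u)) := by field_simp
      _ ≤ M * (Ψ v - Ψ u) := mul_le_mul_of_nonneg_left h3 hM.le
  -- continuity and IVT for Ψ
  have hψcont : ContinuousOn Ψ (Icc a b) := by
    have h := intervalIntegral.continuousOn_primitive_interval'
      (μ := volume) (b₁ := a) (b₂ := b) hint (by rw [uIcc_of_le hab.le]; exact hαmem)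
    rwa [uIcc_of_le hab.le] at h
  have hsurj : Icc (Ψ a) (Ψ b) ⊆ Ψ '' Icc a b := by
    simpa using intermediate_value_Icc hab.le hψcont
  -- the solution candidate
  set z : ℝ → ℝ := fun t => sSup {x | x ∈ Icc a b ∧ Ψ x ≤ t} with hzdef
  have hSbdd : ∀ t : ℝ, BddAbove {x | x ∈ Icc a b ∧ Ψ x ≤ t} :=
    fun t => ⟨b, fun x hx => hx.1.2⟩
  have hSne : ∀ t : ℝ, Ψ a ≤ t → a ∈ {x | x ∈ Icc a b ∧ Ψ x ≤ t} :=
    fun t ht => ⟨hamem, ht⟩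
  have hSclosed : ∀ t : ℝ, IsClosed {x | x ∈ Icc a b ∧ Ψ x ≤ t} := by
    intro t
    have : {x | x ∈ Icc a b ∧ Ψ x ≤ t} = Icc a b ∩ Ψ ⁻¹' (Iic t) := rfl
    rw [this]
    exact hψcont.preimage_isClosed_of_isClosed isClosed_Icc isClosed_Iic
  have hz_mem : ∀ t, Ψ a ≤ t → z t ∈ {x | x ∈ Icc a b ∧ Ψ x ≤ t} :=
    fun t ht => (hSclosed t).csSup_mem ⟨a, hSne t ht⟩ (hSbdd t)
  have hz_Icc : ∀ t, Ψ a ≤ t → z t ∈ Icc a b := fun t ht => (hz_mem t ht).1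
  have hz_inv : ∀ t, t ∈ Icc (Ψ a) (Ψ b) → Ψ (z t) = t := by
    intro t ht
    obtain ⟨x, hx, hΨx⟩ := hsurj ht
    have h1 : x ≤ z t := le_csSup (hSbdd t) ⟨hx, hΨx.le⟩
    have h2 : Ψ (z t) ≤ t := (hz_mem t ht.1).2
    have h3 : z t ≤ x := by
      by_contra h
      push_neg at h
      have := hpsi_lt x (z t) hx (hz_Icc t ht.1) h
      rw [hΨx] at this
      linarith
    have : z t = x := le_antisymm h3 h1
    rw [this, hΨx]
  have hz_top : ∀ t, Ψ b ≤ t → z t = b := by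
    intro t ht
    refine le_antisymm (csSup_le ⟨a, hSne t (le_trans (hpsi_le a b hamem hbmem hab.le) ht)⟩
      fun x hx => hx.1.2) (le_csSup (hSbdd t) ⟨hbmem, ht⟩)
  have hz_psi : ∀ t, Ψ a ≤ t → Ψ (z t) = min t (Ψ b) := by
    intro t ht
    rcases le_total t (Ψ b) with h | h
    · rw [min_eq_left h]; exact hz_inv t ⟨ht, h⟩
    · rw [min_eq_right h, hz_top t h]
  have hz0 : z 0 = α := by
    have h := hz_inv 0 ⟨hA0, hT0⟩
    have hmem := hz_Icc 0 hA0
    by_contra hne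
    rcases lt_or_gt_of_ne hne with h' | h'
    · have := hpsi_lt _ _ hmem hαmem h'; rw [h, hΨα] at this; exact lt_irrefl _ this
    · have := hpsi_lt _ _ hαmem hmem h'; rw [h, hΨα] at this; exact lt_irrefl _ this
  have hz_mono : ∀ s t, Ψ a ≤ s → s ≤ t → z s ≤ z t := by
    intro s t hs hst
    exact csSup_le_csSup (hSbdd t) ⟨a, hSne s hs⟩ (fun x hx => ⟨hx.1, hx.2.trans hst⟩)
  have hz_lip : ∀ s t, Ψ a ≤ s → s ≤ t → z t - z s ≤ M * (t - s) := by
    intro s t hs hst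
    have h1 := hlen (z s) (z t) (hz_Icc s hs) (hz_Icc t (hs.trans hst)) (hz_mono s t hs hst)
    have h2 := hz_psi s hs
    have h3 := hz_psi t (hs.trans hst)
    have h4 : min t (Ψ b) - min s (Ψ b) ≤ t - s := by
      rcases le_total t (Ψ b) with h | h <;> rcases le_total s (Ψ b) with h' | h' <;>
        simp [min_eq_left, min_eq_right, h, h'] <;> linarith
    have h5 : M * (Ψ (z t) - Ψ (z s)) ≤ M * (t - s) := by
      rw [h2, h3]; exact mul_le_mul_of_nonneg_left h4 hM.le
    linarith
  -- continuity of z on Ici (Ψ a)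
  have hzcont : ContinuousOn z (Ici (Ψ a)) := by
    have : LipschitzOnWith (Real.toNNReal M) z (Ici (Ψ a)) := by
      refine LipschitzOnWith.of_dist_le_mul fun x hx y hy => ?_
      rw [Real.dist_eq, Real.dist_eq, Real.coe_toNNReal M hM.le]
      rcases le_total x y with h | h
      · rw [abs_of_nonpos (by linarith [hz_mono x y hx h]), abs_of_nonpos (by linarith)]
        have := hz_lip x y hx h; linarith
      · rw [abs_of_nonneg (by linarith [hz_mono y x hy h]), abs_of_nonneg (by linarith)]
        have := hz_lip y x hy h; linarith
    exact this.continuousOn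
  -- continuity of f on the open interval
  have hfcontAt : ∀ x, a < x → x < b → ContinuousAt f x := by
    intro x h1 h2
    exact ((Real.continuous_sqrt.comp hWc).continuousAt).inv₀
      (Real.sqrt_pos.mpr (hWpos x h1 h2)).ne'
  have hψderiv : ∀ x, x ∈ Ioo a b → HasDerivAt Ψ (f x) x := by
    intro x hx
    have hfcontOn : ContinuousOn f (Ioo a b) :=
      fun y hy => (hfcontAt y hy.1 hy.2).continuousWithinAt
    exact intervalIntegral.integral_hasDerivAt_right
      (hfint α x hαmem (Ioo_subset_Icc_self hx))
      (hfcontOn.stronglyMeasurableAtFilter isOpen_Ioo x hx)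
      (hfcontAt x hx.1 hx.2)
  -- interior derivative
  have hderiv_int : ∀ t, Ψ a < t → t < Ψ b → HasDerivAt z (Real.sqrt (W (z t))) t := by
    intro t h1 h2
    have htmem : t ∈ Icc (Ψ a) (Ψ b) := ⟨h1.le, h2.le⟩
    have hzt := hz_Icc t h1.le
    have hzo : z t ∈ Ioo a b := by
      constructor
      · rcases eq_or_lt_of_le hzt.1 with h | h
        · exfalso; have := hz_inv t htmem; rw [← h] at this; linarith
        · exact h
      · rcases eq_or_lt_of_le hzt.2 with h | h
        · exfalso; have := hz_inv t htmem; rw [h] at this; linarith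
        · exact h
    have hΨd := hψderiv (z t) hzo
    have hne : f (z t) ≠ 0 := (hfpos _ hzo.1 hzo.2).ne'
    have hcz : ContinuousAt z t :=
      hzcont.continuousAt (Ici_mem_nhds h1)
    have hev : ∀ᶠ y in 𝓝 t, Ψ (z y) = y := by
      filter_upwards [Ioo_mem_nhds h1 h2] with y hy
      exact hz_inv y ⟨hy.1.le, hy.2.le⟩
    have h := HasDerivAt.of_local_left_inverse hcz hΨd hne hev
    have : (f (z t))⁻¹ = Real.sqrt (W (z t)) := by
      simp [hfdef]
    rwa [this] at h
  -- derivative at left endpoint when Ψ a = 0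
  have hderiv_left : Ψ a = 0 → HasDerivWithinAt z (Real.sqrt (W (z 0))) (Ici 0) 0 := by
    intro hA
    have hza : z 0 = a := by
      have h := hz_inv 0 ⟨hA.le, hT0⟩
      have hmem := hz_Icc 0 hA.le
      by_contra hne
      have h' : a < z 0 := lt_of_le_of_ne hmem.1 (Ne.symm hne)
      have := hpsi_lt a (z 0) hamem hmem h'
      rw [h, hA] at this; exact lt_irrefl _ this
    have hWa : Real.sqrt (W (z 0)) = 0 := by
      rw [hza, (hzeros a).mpr (Or.inl rfl), Real.sqrt_zero]
    rw [hWa, hasDerivWithinAt_iff_tendsto_slope]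
    rw [Metric.tendsto_nhdsWithin_nhds]
    intro ε hε
    -- choose δ₁ from continuity of W at a
    have hWca : ContinuousAt W a := hWc.continuousAt
    have hWa0 : W a = 0 := (hzeros a).mpr (Or.inl rfl)
    obtain ⟨δ₁, hδ₁, hδ₁W⟩ := Metric.continuousAt_iff.mp hWca ((ε / 2) ^ 2) (by positivity)
    refine ⟨δ₁ / M, by positivity, ?_⟩
    intro s hs hsd
    obtain ⟨hs0, hsne⟩ := hs
    have hspos : 0 < s := lt_of_le_of_ne hs0 (fun h => hsne (by simp [← h]))
    rw [Real.dist_eq, sub_zero, abs_of_pos hspos] at hsd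
    have hzs := hz_Icc s (hA.le.trans hs0)
    have hαa : α = a := by rw [← hza, hz0]
    have hzs_ub : z s - a < δ₁ := by
      have hl := hz_lip 0 s hA0 hs0
      rw [hz0, hαa] at hl
      have h2 : M * s < M * (δ₁ / M) := mul_lt_mul_of_pos_left hsd hM
      rw [mul_div_cancel₀ _ hM.ne'] at h2
      linarith
    have hfb : ∀ x, a < x → x < z s → (ε / 2)⁻¹ ≤ f x := by
      intro x hx1 hx2
      have hxd : dist x a < δ₁ := by
        rw [Real.dist_eq, abs_of_pos (by linarith)]
        linarith
      have hWx : W x < (ε / 2) ^ 2 := by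
        have := hδ₁W hxd
        rw [Real.dist_eq, hWa0, sub_zero, abs_of_nonneg (hWnn x)] at this
        exact this
      have hsx : Real.sqrt (W x) ≤ ε / 2 := by
        calc Real.sqrt (W x) ≤ Real.sqrt ((ε / 2) ^ 2) := Real.sqrt_le_sqrt hWx.le
          _ = ε / 2 := Real.sqrt_sq (by positivity)
      exact inv_anti₀ (Real.sqrt_pos.mpr
        (hWpos x hx1 (lt_of_lt_of_le hx2 hzs.2))) hsx
    have hlb : (ε / 2)⁻¹ * (z s - a) ≤ Ψ (z s) - Ψ a :=
      (hΨadd a (z s) hamem hzs) ▸ hint_lb _ a (z s) hamem hzs hzs.1 hfb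
    have hΨzs : Ψ (z s) ≤ s := by
      rw [hz_psi s (hA.le.trans hs0)]
      exact min_le_left _ _
    have hnum : 0 ≤ z s - a := by
      have := hz_mono 0 s hA0 hs0
      rw [hz0, hαa] at this
      linarith
    have hkey : z s - a ≤ (ε / 2) * s := by
      have h1 : (ε / 2)⁻¹ * (z s - a) ≤ s := by rw [hA] at hlb; linarith
      calc z s - a = (ε / 2) * ((ε / 2)⁻¹ * (z s - a)) := by field_simp
        _ ≤ (ε / 2) * s := mul_le_mul_of_nonneg_left h1 (by positivity)
    have hslope : slope z 0 s = (z s - a) / s := by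
      rw [slope_def_field, hz0, hαa, sub_zero]
    rw [Real.dist_eq, sub_zero, hslope, abs_of_nonneg (div_nonneg hnum hspos.le)]
    have : (z s - a) / s ≤ ε / 2 := (div_le_iff₀ hspos).mpr (by linarith)
    linarith
  -- derivative at the right endpoint (from within Ici 0)
  have hderiv_right : HasDerivWithinAt z (Real.sqrt (W (z (Ψ b)))) (Ici 0) (Ψ b) := by
    have hzb : z (Ψ b) = b := hz_top _ (le_refl _)
    have hWb0 : W b = 0 := (hzeros b).mpr (Or.inr rfl)
    have hWb : Real.sqrt (W (z (Ψ b))) = 0 := by rw [hzb, hWb0, Real.sqrt_zero]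
    rw [hWb, hasDerivWithinAt_iff_tendsto_slope, Metric.tendsto_nhdsWithin_nhds]
    intro ε hε
    obtain ⟨δ₁, hδ₁, hδ₁W⟩ := Metric.continuousAt_iff.mp hWc.continuousAt ((ε / 2) ^ 2)
      (by positivity)
    refine ⟨δ₁ / M, by positivity, ?_⟩
    intro s hs hsd
    obtain ⟨hs0, hsne⟩ := hs
    have hsne' : s ≠ Ψ b := fun h => hsne (by simp [h])
    rcases lt_or_gt_of_ne hsne' with hlt | hgt
    · have hsA : Ψ a ≤ s := hA0.trans hs0
      have hzs := hz_Icc s hsA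
      rw [Real.dist_eq, abs_of_nonpos (by linarith)] at hsd
      have hl : b - z s < δ₁ := by
        have h0 := hz_lip s (Ψ b) hsA hlt.le
        rw [hzb] at h0
        have h2 : M * (Ψ b - s) < M * (δ₁ / M) := mul_lt_mul_of_pos_left (by linarith) hM
        rw [mul_div_cancel₀ _ hM.ne'] at h2
        linarith
      have hfb : ∀ x, z s < x → x < b → (ε / 2)⁻¹ ≤ f x := by
        intro x hx1 hx2
        have hxd : dist x b < δ₁ := by
          rw [Real.dist_eq, abs_of_nonpos (by linarith)]
          linarith
        have hWx : W x < (ε / 2) ^ 2 := by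
          have := hδ₁W hxd
          rw [Real.dist_eq, hWb0, sub_zero, abs_of_nonneg (hWnn x)] at this
          exact this
        have hsx : Real.sqrt (W x) ≤ ε / 2 := by
          calc Real.sqrt (W x) ≤ Real.sqrt ((ε / 2) ^ 2) := Real.sqrt_le_sqrt hWx.le
            _ = ε / 2 := Real.sqrt_sq (by positivity)
        exact inv_anti₀ (Real.sqrt_pos.mpr
          (hWpos x (lt_of_le_of_lt hzs.1 hx1) hx2)) hsx
      have hlb : (ε / 2)⁻¹ * (b - z s) ≤ Ψ b - Ψ (z s) :=
        (hΨadd (z s) b hzs hbmem) ▸ hint_lb _ (z s) b hzs hbmem hzs.2 hfb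
      have hΨzs : Ψ (z s) = s := hz_inv s ⟨hsA, hlt.le⟩
      have hnum : 0 ≤ b - z s := by linarith [hzs.2]
      have hkey : b - z s ≤ (ε / 2) * (Ψ b - s) := by
        have h1 : (ε / 2)⁻¹ * (b - z s) ≤ Ψ b - s := by rw [hΨzs] at hlb; linarith
        calc b - z s = (ε / 2) * ((ε / 2)⁻¹ * (b - z s)) := by field_simp
          _ ≤ (ε / 2) * (Ψ b - s) := mul_le_mul_of_nonneg_left h1 (by positivity)
      have hslope : slope z (Ψ b) s = (b - z s) / (Ψ b - s) := by
        rw [slope_def_field, hzb, show z s - b = -(b - z s) by ring,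
          show s - Ψ b = -(Ψ b - s) by ring, neg_div_neg_eq]
      rw [Real.dist_eq, sub_zero, hslope,
        abs_of_nonneg (div_nonneg hnum (by linarith))]
      have : (b - z s) / (Ψ b - s) ≤ ε / 2 := (div_le_iff₀ (by linarith)).mpr (by linarith)
      linarith
    · have : slope z (Ψ b) s = 0 := by
        rw [slope_def_field, hz_top s hgt.le, hzb, sub_self, zero_div]
      rw [this]
      simpa using hε
  -- assembling the derivative statement
  have hd : ∀ t ∈ Ici (0:ℝ), HasDerivWithinAt z (Real.sqrt (W (z t))) (Ici 0) t := by
    intro t ht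
    rcases lt_trichotomy t (Ψ b) with hlt | heq | hgt
    · rcases eq_or_lt_of_le (hA0.trans ht) with h0 | h0
      · have ht0 : t = 0 := le_antisymm (h0 ▸ hA0) ht
        subst ht0
        exact hderiv_left h0
      · exact (hderiv_int t h0 hlt).hasDerivWithinAt
    · subst heq
      exact hderiv_right
    · have hzb : z t = b := hz_top t hgt.le
      have hW0 : Real.sqrt (W (z t)) = 0 := by
        rw [hzb, (hzeros b).mpr (Or.inr rfl), Real.sqrt_zero]
      rw [hW0]
      have hev : z =ᶠ[𝓝 t] (fun _ => b) := by
        filter_upwards [Ioi_mem_nhds hgt] with y hy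
        exact hz_top y hy.le
      exact ((hasDerivAt_const t b).congr_of_eventuallyEq hev).hasDerivWithinAt
  have hzcont0 : ContinuousOn z (Ici 0) := hzcont.mono (Ici_subset_Ici.mpr hA0)
  have hcd : ContDiffOn ℝ 1 z (Ici 0) := by
    rw [show (1 : WithTop ℕ∞) = 0 + 1 from (zero_add 1).symm,
      contDiffOn_succ_iff_derivWithin (uniqueDiffOn_Ici 0)]
    refine ⟨fun t ht => (hd t ht).differentiableWithinAt, by simp, ?_⟩
    rw [contDiffOn_zero]
    refine ContinuousOn.congr ((Real.continuous_sqrt.comp hWc).comp_continuousOn hzcont0) ?_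
    exact fun t ht => (hd t ht).derivWithin (uniqueDiffOn_Ici 0 t ht)
  refine ⟨z, fun t ht => hz_Icc t (hA0.trans ht), hz0, hcd, hd, ?_, ?_⟩
  · intro t ht
    have h2 : t ≤ Ψ b := by rw [hΨap]; exact ht.2
    have h := hz_inv t ⟨hA0.trans ht.1, h2⟩
    rw [← hΨap]
    exact h
  · intro t ht
    have : Ψ b < t := by rw [hΨap]; exact ht
    exact hz_top t this.le
end

section
/- The solution z_α to z' = √(W(z)), z(0) = α, taking values in [a,b], is unique if and only if α > a. (For α = a, both the constant function a and the function leaving the well immediately are solutions.) -/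
open Real Set Filter Topology MeasureTheory

namespace CPU

variable {W : ℝ → ℝ} {a b : ℝ}

lemma sqrtW_pos (hWnn : ∀ x, 0 ≤ W x) (hzeros : ∀ x, W x = 0 ↔ x = a ∨ x = b)
    {x : ℝ} (hax : a < x) (hxb : x < b) : 0 < Real.sqrt (W x) := by
  apply Real.sqrt_pos.2
  rcases (hWnn x).lt_or_eq with h | h
  · exact h
  · rcases (hzeros x).1 h.symm with rfl | rfl
    · exact absurd hax (lt_irrefl _)
    · exact absurd hxb (lt_irrefl _)

lemma f_meas (hWc : Continuous W) : Measurable (fun s => (Real.sqrt (W s))⁻¹) :=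
  ((Real.continuous_sqrt.comp hWc).measurable).inv

lemma f_contAt (hWc : Continuous W) (hWnn : ∀ x, 0 ≤ W x)
    (hzeros : ∀ x, W x = 0 ↔ x = a ∨ x = b) {x : ℝ} (hax : a < x) (hxb : x < b) :
    ContinuousAt (fun s => (Real.sqrt (W s))⁻¹) x :=
  ((Real.continuous_sqrt.comp hWc).continuousAt).inv₀ (sqrtW_pos hWnn hzeros hax hxb).ne'

lemma f_int (hab : a < b)
    (hint : IntervalIntegrable (fun s => (Real.sqrt (W s))⁻¹) volume a b)
    {x y : ℝ} (hx : x ∈ Icc a b) (hy : y ∈ Icc a b) :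
    IntervalIntegrable (fun s => (Real.sqrt (W s))⁻¹) volume x y :=
  hint.mono_set (by
    rw [uIcc_of_le hab.le]
    exact uIcc_subset_Icc hx hy)

lemma f_integral_pos (hab : a < b) (hWnn : ∀ x, 0 ≤ W x)
    (hzeros : ∀ x, W x = 0 ↔ x = a ∨ x = b)
    (hint : IntervalIntegrable (fun s => (Real.sqrt (W s))⁻¹) volume a b)
    {x y : ℝ} (hx : x ∈ Icc a b) (hy : y ∈ Icc a b) (hxy : x < y) :
    0 < ∫ s in x..y, (Real.sqrt (W s))⁻¹ := by
  apply intervalIntegral.intervalIntegral_pos_of_pos_on (f_int hab hint hx hy)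
    (fun s hs => inv_pos.2 (sqrtW_pos hWnn hzeros (lt_of_le_of_lt hx.1 hs.1)
      (lt_of_lt_of_le hs.2 hy.2))) hxy

end CPU

namespace CPU2
open CPU

variable {W : ℝ → ℝ} {a b : ℝ}

lemma prim_strictMonoOn (hab : a < b) (hWnn : ∀ x, 0 ≤ W x)
    (hzeros : ∀ x, W x = 0 ↔ x = a ∨ x = b)
    (hint : IntervalIntegrable (fun s => (Real.sqrt (W s))⁻¹) volume a b)
    {c : ℝ} (hc : c ∈ Icc a b) :
    StrictMonoOn (fun x => ∫ s in c..x, (Real.sqrt (W s))⁻¹) (Icc a b) := by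
  intro x hx y hy hxy
  have h1 := intervalIntegral.integral_add_adjacent_intervals
    (f_int hab hint hc hx) (f_int hab hint hx hy)
  have h2 := f_integral_pos hab hWnn hzeros hint hx hy hxy
  simp only [] at h1 ⊢
  linarith

lemma prim_contOn (hab : a < b)
    (hint : IntervalIntegrable (fun s => (Real.sqrt (W s))⁻¹) volume a b)
    {c : ℝ} (hc : c ∈ Icc a b) :
    ContinuousOn (fun x => ∫ s in c..x, (Real.sqrt (W s))⁻¹) (Icc a b) := by
  have := intervalIntegral.continuousOn_primitive_interval' hint
    (by rwa [uIcc_of_le hab.le])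
  rwa [uIcc_of_le hab.le] at this

lemma prim_hasDerivAt (hab : a < b) (hWc : Continuous W) (hWnn : ∀ x, 0 ≤ W x)
    (hzeros : ∀ x, W x = 0 ↔ x = a ∨ x = b)
    (hint : IntervalIntegrable (fun s => (Real.sqrt (W s))⁻¹) volume a b)
    {c : ℝ} (hc : c ∈ Icc a b) {x : ℝ} (hax : a < x) (hxb : x < b) :
    HasDerivAt (fun u => ∫ s in c..u, (Real.sqrt (W s))⁻¹) ((Real.sqrt (W x))⁻¹) x :=
  intervalIntegral.integral_hasDerivAt_right (f_int hab hint hc ⟨hax.le, hxb.le⟩)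
    ((f_meas hWc).stronglyMeasurable.stronglyMeasurableAtFilter)
    (f_contAt hWc hWnn hzeros hax hxb)

end CPU2

namespace CPU3
open CPU CPU2

variable {W : ℝ → ℝ} {a b α : ℝ} {z : ℝ → ℝ}

lemma sol_contOn (hz' : ∀ t ∈ Ici (0:ℝ), HasDerivWithinAt z (Real.sqrt (W (z t))) (Ici 0) t) :
    ContinuousOn z (Ici 0) := fun t ht => (hz' t ht).continuousWithinAt

lemma sol_mono (hz' : ∀ t ∈ Ici (0:ℝ), HasDerivWithinAt z (Real.sqrt (W (z t))) (Ici 0) t) :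
    MonotoneOn z (Ici 0) := by
  apply monotoneOn_of_deriv_nonneg (convex_Ici 0) (sol_contOn hz')
  · intro x hx
    rw [interior_Ici] at hx
    exact ((hz' x (mem_Ici.2 (le_of_lt hx))).hasDerivAt
      (Ici_mem_nhds hx)).differentiableAt.differentiableWithinAt
  · intro x hx
    rw [interior_Ici] at hx
    rw [((hz' x (mem_Ici.2 (le_of_lt hx))).hasDerivAt (Ici_mem_nhds hx)).deriv]
    exact Real.sqrt_nonneg _

lemma caseA (hab : a < b) (hWc : Continuous W) (hWnn : ∀ x, 0 ≤ W x)
    (hzeros : ∀ x, W x = 0 ↔ x = a ∨ x = b)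
    (hint : IntervalIntegrable (fun s => (Real.sqrt (W s))⁻¹) volume a b)
    (hα : α ∈ Icc a b) (haα : a < α)
    (hz1 : ∀ t ∈ Ici (0:ℝ), z t ∈ Icc a b) (hz0 : z 0 = α)
    (hz' : ∀ t ∈ Ici (0:ℝ), HasDerivWithinAt z (Real.sqrt (W (z t))) (Ici 0) t)
    {t : ℝ} (ht : 0 ≤ t) (hlt : ∀ s ∈ Icc 0 t, z s < b) :
    (∫ s in α..(z t), (Real.sqrt (W s))⁻¹) = t := by
  set G : ℝ → ℝ := fun x => ∫ s in α..x, (Real.sqrt (W s))⁻¹ with hG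
  have hmono := sol_mono hz'
  have key : ∀ x ∈ Icc 0 t, G (z x) - x = G (z 0) - 0 := by
    apply constant_of_has_deriv_right_zero
    · apply ContinuousOn.sub _ continuousOn_id
      exact (prim_contOn hab hint hα).comp
        ((sol_contOn hz').mono (fun u hu => hu.1))
        (fun u hu => hz1 u hu.1)
    · intro s hs
      have hs0 : (0:ℝ) ≤ s := hs.1
      have hzs := hz1 s hs0
      have hαz : α ≤ z s := hz0 ▸ hmono self_mem_Ici hs0 hs0
      have hzlt : z s < b := hlt s ⟨hs.1, hs.2.le⟩
      have hzgt : a < z s := lt_of_lt_of_le haα hαz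
      have hGd := prim_hasDerivAt hab hWc hWnn hzeros hint hα hzgt hzlt
      have hzd := (hz' s hs0).mono (Ici_subset_Ici.2 hs0)
      have hcomp := hGd.comp_hasDerivWithinAt s hzd
      have hone : (Real.sqrt (W (z s)))⁻¹ * Real.sqrt (W (z s)) = 1 :=
        inv_mul_cancel₀ (sqrtW_pos hWnn hzeros hzgt hzlt).ne'
      have := hcomp.sub (hasDerivWithinAt_id s (Ici s))
      rw [hone] at this
      simp only [sub_self] at this
      exact this
  have := key t ⟨ht, le_rfl⟩
  rw [hz0] at this
  simp only [hG, intervalIntegral.integral_same] at this ⊢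
  linarith

end CPU3

namespace CPU4
open CPU CPU2 CPU3

variable {W : ℝ → ℝ} {a b α : ℝ} {z : ℝ → ℝ}

lemma keylemma (hab : a < b) (hWc : Continuous W) (hWnn : ∀ x, 0 ≤ W x)
    (hzeros : ∀ x, W x = 0 ↔ x = a ∨ x = b)
    (hint : IntervalIntegrable (fun s => (Real.sqrt (W s))⁻¹) volume a b)
    (hα : α ∈ Icc a b) (haα : a < α)
    (hz1 : ∀ t ∈ Ici (0:ℝ), z t ∈ Icc a b) (hz0 : z 0 = α)
    (hz' : ∀ t ∈ Ici (0:ℝ), HasDerivWithinAt z (Real.sqrt (W (z t))) (Ici 0) t)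
    {t : ℝ} (ht : 0 ≤ t) :
    (∫ s in α..(z t), (Real.sqrt (W s))⁻¹)
      = min t (∫ s in α..b, (Real.sqrt (W s))⁻¹) := by
  set G : ℝ → ℝ := fun x => ∫ s in α..x, (Real.sqrt (W s))⁻¹ with hGdef
  have hmono := sol_mono hz'
  have hGm := prim_strictMonoOn hab hWnn hzeros hint hα
  by_cases hcase : ∀ s ∈ Icc (0:ℝ) t, z s < b
  · have h1 := caseA hab hWc hWnn hzeros hint hα haα hz1 hz0 hz' ht hcase
    have h2 : G (z t) < G b := hGm (hz1 t ht) (right_mem_Icc.2 hab.le)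
      (hcase t ⟨ht, le_rfl⟩)
    rw [min_eq_left]
    · exact h1
    · rw [← h1]; exact h2.le
  · push_neg at hcase
    obtain ⟨s₀, hs₀, hs₀b⟩ := hcase
    have hzs₀ : z s₀ = b := le_antisymm (hz1 s₀ hs₀.1).2 hs₀b
    set S : Set ℝ := Icc 0 t ∩ z ⁻¹' {b} with hSdef
    have hSne : S.Nonempty := ⟨s₀, hs₀, hzs₀⟩
    have hSbdd : BddBelow S := ⟨0, fun u hu => hu.1.1⟩
    have hSclosed : IsClosed S :=
      ((sol_contOn hz').mono (fun u (hu : u ∈ Icc (0:ℝ) t) => hu.1)).preimage_isClosed_of_isClosed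
        isClosed_Icc isClosed_singleton
    set τ := sInf S with hτdef
    have hτS : τ ∈ S := hSclosed.csInf_mem hSne hSbdd
    obtain ⟨⟨hτ0, hτt⟩, hzτ⟩ := hτS
    have hzτ' : z τ = b := hzτ
    -- values before τ
    have hsmall : ∀ s, 0 ≤ s → s < τ → G (z s) = s := by
      intro s hs0 hsτ
      apply caseA hab hWc hWnn hzeros hint hα haα hz1 hz0 hz' hs0
      intro u hu
      have huz : z u ≤ z s := hmono hu.1 hs0 hu.2
      rcases lt_or_eq_of_le (hz1 s hs0).2 with h | h
      · exact lt_of_le_of_lt huz h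
      · exfalso
        have : s ∈ S := ⟨⟨hs0, hsτ.le.trans hτt⟩, h⟩
        exact absurd (csInf_le hSbdd this) (not_le.2 hsτ)
    -- T ≤ t
    have hTt : G b ≤ t := by
      rcases eq_or_lt_of_le hτ0 with h0 | hpos
      · -- τ = 0, so α = b
        have hαb : α = b := by rw [← hz0, h0]; exact hzτ'
        have : G b = 0 := by rw [← hαb]; simp [hGdef]
        rw [this]; exact ht
      · have hφc : ContinuousWithinAt (fun s => G (z s)) (Ico 0 τ) τ := by
          apply ContinuousWithinAt.comp
            ((prim_contOn hab hint hα) (z τ) (hz1 τ hτ0))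
            (((sol_contOn hz') τ hτ0).mono (fun u (hu : u ∈ Ico (0:ℝ) τ) => hu.1))
            (fun u hu => hz1 u hu.1)
        have hne : (𝓝[Ico (0:ℝ) τ] τ).NeBot := by
          rw [← mem_closure_iff_nhdsWithin_neBot, closure_Ico hpos.ne]
          exact right_mem_Icc.2 hpos.le
        have heq : (fun s => G (z s)) =ᶠ[𝓝[Ico (0:ℝ) τ] τ] id := by
          filter_upwards [self_mem_nhdsWithin] with u hu
          exact hsmall u hu.1 hu.2
        have h1 : Tendsto (fun s => G (z s)) (𝓝[Ico (0:ℝ) τ] τ) (𝓝 (G (z τ))) :=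
          hφc.tendsto
        have h2 : Tendsto (fun s => G (z s)) (𝓝[Ico (0:ℝ) τ] τ) (𝓝 τ) := by
          refine Tendsto.congr' heq.symm ?_
          exact tendsto_id.mono_left nhdsWithin_le_nhds
        have := tendsto_nhds_unique h1 h2
        rw [hzτ'] at this
        rw [this]; exact hτt
    have hzt : z t = b := le_antisymm (hz1 t ht).2 (hzτ' ▸ hmono hτ0 ht hτt)
    rw [hzt, min_eq_right hTt]

end CPU4

namespace CPU5
open CPU CPU2 CPU3

variable {W : ℝ → ℝ} {a b : ℝ}

lemma low_a (hab : a < b) (hWc : Continuous W) (hWnn : ∀ x, 0 ≤ W x)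
    (hzeros : ∀ x, W x = 0 ↔ x = a ∨ x = b)
    (hint : IntervalIntegrable (fun s => (Real.sqrt (W s))⁻¹) volume a b)
    {ε : ℝ} (hε : 0 < ε) :
    ∃ δ' > 0, a + δ' < b ∧
      ∀ x ∈ Icc a (a + δ'), x - a ≤ ε * ∫ s in a..x, (Real.sqrt (W s))⁻¹ := by
  have hWa : W a = 0 := (hzeros a).2 (Or.inl rfl)
  have hca : ContinuousAt (fun s => Real.sqrt (W s)) a :=
    (Real.continuous_sqrt.comp hWc).continuousAt
  rw [Metric.continuousAt_iff] at hca
  obtain ⟨δ₀, hδ₀, hca⟩ := hca ε hε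
  set δ' := min (δ₀/2) ((b-a)/2) with hδ'def
  have hδ'pos : 0 < δ' := lt_min (by linarith) (by linarith)
  have hδ'b : a + δ' < b := by
    have := min_le_right (δ₀/2) ((b-a)/2)
    simp only [← hδ'def] at this
    linarith
  refine ⟨δ', hδ'pos, hδ'b, ?_⟩
  have hsq : ∀ s ∈ Ioo a (a + δ'), ε⁻¹ ≤ (Real.sqrt (W s))⁻¹ := by
    intro s hs
    have hd : dist s a < δ₀ := by
      rw [Real.dist_eq, abs_of_pos (by linarith [hs.1] : (0:ℝ) < s - a)]
      have h2 : δ' ≤ δ₀/2 := min_le_left _ _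
      linarith [hs.2]
    have := hca hd
    rw [Real.dist_eq, hWa, Real.sqrt_zero, sub_zero,
      abs_of_nonneg (Real.sqrt_nonneg _)] at this
    exact inv_anti₀ (sqrtW_pos hWnn hzeros hs.1 (by linarith [hs.2])) this.le
  intro x hx
  have hax : a ≤ x := hx.1
  have hxb : x ≤ b := by linarith [hx.2]
  have hFx : (∫ s in a..x, (Real.sqrt (W s))⁻¹)
      = ∫ s in Ioo a x, (Real.sqrt (W s))⁻¹ := by
    rw [intervalIntegral.integral_of_le hax, integral_Ioc_eq_integral_Ioo]
  have hintx : IntegrableOn (fun s => (Real.sqrt (W s))⁻¹) (Ioo a x) volume := by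
    have h1 := f_int hab hint (left_mem_Icc.2 hab.le) ⟨hax, hxb⟩
    rw [intervalIntegrable_iff_integrableOn_Ioc_of_le hax] at h1
    exact h1.mono_set Ioo_subset_Ioc_self
  have hmono_int : (∫ _ in Ioo a x, ε⁻¹ ∂volume)
      ≤ ∫ s in Ioo a x, (Real.sqrt (W s))⁻¹ ∂volume := by
    apply setIntegral_mono_on (integrableOn_const measure_Ioo_lt_top.ne)
      hintx measurableSet_Ioo
    intro s hs
    exact hsq s ⟨hs.1, lt_of_lt_of_le hs.2 hx.2⟩
  have hconst : (∫ _ in Ioo a x, ε⁻¹ ∂volume) = (x - a) * ε⁻¹ := by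
    rw [setIntegral_const, Real.volume_real_Ioo_of_le (by linarith),
      smul_eq_mul]
  rw [hFx]
  have h1 : (x - a) * ε⁻¹ ≤ ∫ s in Ioo a x, (Real.sqrt (W s))⁻¹ := by
    rw [← hconst]; exact hmono_int
  calc x - a = ε * ((x - a) * ε⁻¹) := by field_simp
    _ ≤ ε * ∫ s in Ioo a x, (Real.sqrt (W s))⁻¹ :=
        mul_le_mul_of_nonneg_left h1 hε.le

lemma low_b (hab : a < b) (hWc : Continuous W) (hWnn : ∀ x, 0 ≤ W x)
    (hzeros : ∀ x, W x = 0 ↔ x = a ∨ x = b)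
    (hint : IntervalIntegrable (fun s => (Real.sqrt (W s))⁻¹) volume a b)
    {ε : ℝ} (hε : 0 < ε) :
    ∃ δ' > 0, a < b - δ' ∧
      ∀ x ∈ Icc (b - δ') b, b - x ≤ ε * ∫ s in x..b, (Real.sqrt (W s))⁻¹ := by
  have hWb : W b = 0 := (hzeros b).2 (Or.inr rfl)
  have hcb : ContinuousAt (fun s => Real.sqrt (W s)) b :=
    (Real.continuous_sqrt.comp hWc).continuousAt
  rw [Metric.continuousAt_iff] at hcb
  obtain ⟨δ₀, hδ₀, hcb⟩ := hcb ε hε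
  set δ' := min (δ₀/2) ((b-a)/2) with hδ'def
  have hδ'pos : 0 < δ' := lt_min (by linarith) (by linarith)
  have hδ'b : a < b - δ' := by
    have := min_le_right (δ₀/2) ((b-a)/2)
    simp only [← hδ'def] at this
    linarith
  refine ⟨δ', hδ'pos, hδ'b, ?_⟩
  have hsq : ∀ s ∈ Ioo (b - δ') b, ε⁻¹ ≤ (Real.sqrt (W s))⁻¹ := by
    intro s hs
    have hd : dist s b < δ₀ := by
      rw [Real.dist_eq, abs_of_neg (by linarith [hs.2] : s - b < 0)]
      have h2 : δ' ≤ δ₀/2 := min_le_left _ _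
      linarith [hs.1]
    have := hcb hd
    rw [Real.dist_eq, hWb, Real.sqrt_zero, sub_zero,
      abs_of_nonneg (Real.sqrt_nonneg _)] at this
    exact inv_anti₀ (sqrtW_pos hWnn hzeros (by linarith [hs.1]) hs.2) this.le
  intro x hx
  have hxb : x ≤ b := hx.2
  have hax : a ≤ x := by linarith [hx.1]
  have hFx : (∫ s in x..b, (Real.sqrt (W s))⁻¹)
      = ∫ s in Ioo x b, (Real.sqrt (W s))⁻¹ := by
    rw [intervalIntegral.integral_of_le hxb, integral_Ioc_eq_integral_Ioo]
  have hintx : IntegrableOn (fun s => (Real.sqrt (W s))⁻¹) (Ioo x b) volume := by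
    have h1 := f_int hab hint ⟨hax, hxb⟩ (right_mem_Icc.2 hab.le)
    rw [intervalIntegrable_iff_integrableOn_Ioc_of_le hxb] at h1
    exact h1.mono_set Ioo_subset_Ioc_self
  have hmono_int : (∫ _ in Ioo x b, ε⁻¹ ∂volume)
      ≤ ∫ s in Ioo x b, (Real.sqrt (W s))⁻¹ ∂volume := by
    apply setIntegral_mono_on (integrableOn_const measure_Ioo_lt_top.ne)
      hintx measurableSet_Ioo
    intro s hs
    exact hsq s ⟨lt_of_le_of_lt hx.1 hs.1, hs.2⟩
  have hconst : (∫ _ in Ioo x b, ε⁻¹ ∂volume) = (b - x) * ε⁻¹ := by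
    rw [setIntegral_const, Real.volume_real_Ioo_of_le (by linarith),
      smul_eq_mul]
  rw [hFx]
  have h1 : (b - x) * ε⁻¹ ≤ ∫ s in Ioo x b, (Real.sqrt (W s))⁻¹ := by
    rw [← hconst]; exact hmono_int
  calc b - x = ε * ((b - x) * ε⁻¹) := by field_simp
    _ ≤ ε * ∫ s in Ioo x b, (Real.sqrt (W s))⁻¹ :=
        mul_le_mul_of_nonneg_left h1 hε.le

lemma exists_second_sol (hab : a < b) (hWc : Continuous W) (hWnn : ∀ x, 0 ≤ W x)
    (hzeros : ∀ x, W x = 0 ↔ x = a ∨ x = b)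
    (hint : IntervalIntegrable (fun s => (Real.sqrt (W s))⁻¹) volume a b) :
    ∃ z : ℝ → ℝ, (∀ t ∈ Ici (0:ℝ), z t ∈ Icc a b) ∧ z 0 = a ∧
      (∀ t ∈ Ici (0:ℝ), HasDerivWithinAt z (Real.sqrt (W (z t))) (Ici 0) t) ∧
      ∃ t ∈ Ici (0:ℝ), z t = b := by
  have hWa : W a = 0 := (hzeros a).2 (Or.inl rfl)
  have hWb : W b = 0 := (hzeros b).2 (Or.inr rfl)
  set F : ℝ → ℝ := fun x => ∫ s in a..x, (Real.sqrt (W s))⁻¹ with hFdef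
  have haI : a ∈ Icc a b := left_mem_Icc.2 hab.le
  have hbI : b ∈ Icc a b := right_mem_Icc.2 hab.le
  have hFm : StrictMonoOn F (Icc a b) := prim_strictMonoOn hab hWnn hzeros hint haI
  have hFc : ContinuousOn F (Icc a b) := prim_contOn hab hint haI
  have hFa : F a = 0 := intervalIntegral.integral_same
  set T := F b with hTdef
  have hT0 : 0 < T := f_integral_pos hab hWnn hzeros hint haI hbI hab
  set z : ℝ → ℝ := fun t => sSup {x | x ∈ Icc a b ∧ F x ≤ t} with hzdef
  -- z inverts F
  have hzF : ∀ x ∈ Icc a b, z (F x) = x := by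
    intro x hx
    have hset : {y | y ∈ Icc a b ∧ F y ≤ F x} = Icc a x := by
      ext y
      constructor
      · rintro ⟨hy, hle⟩
        refine ⟨hy.1, ?_⟩
        by_contra h
        push_neg at h
        exact absurd (hFm hx hy h) (not_lt.2 hle)
      · intro hy
        have hy' : y ∈ Icc a b := ⟨hy.1, hy.2.trans hx.2⟩
        exact ⟨hy', hFm.monotoneOn hy' hx hy.2⟩
    simp only [hzdef]
    rw [hset]
    exact csSup_Icc hx.1
  -- for t in [0,T]
  have hP : ∀ t ∈ Icc 0 T, z t ∈ Icc a b ∧ F (z t) = t := by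
    intro t ht
    have : t ∈ Icc (F a) (F b) := by rwa [hFa]
    obtain ⟨x, hx, hFx⟩ := intermediate_value_Icc hab.le hFc this
    rw [← hFx, hzF x hx]
    exact ⟨hx, rfl⟩
  have hz0 : z 0 = a := by
    have := hzF a haI
    rwa [hFa] at this
  have hzT : z T = b := hzF b hbI
  -- for t ≥ T, z t = b
  have hP4 : ∀ t, T ≤ t → z t = b := by
    intro t ht
    have hset : {x | x ∈ Icc a b ∧ F x ≤ t} = Icc a b := by
      ext y
      refine ⟨fun hy => hy.1, fun hy => ⟨hy, (hFm.monotoneOn hy hbI hy.2).trans ht⟩⟩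
    simp only [hzdef]
    rw [hset]
    exact csSup_Icc hab.le
  have hmem : ∀ t ∈ Ici (0:ℝ), z t ∈ Icc a b := by
    intro t ht
    rcases le_total t T with h | h
    · exact (hP t ⟨ht, h⟩).1
    · rw [hP4 t h]; exact hbI
  -- z strictly inside for t in (0,T)
  have hin : ∀ t ∈ Ioo 0 T, z t ∈ Ioo a b := by
    intro t ht
    obtain ⟨hzt, hFzt⟩ := hP t ⟨ht.1.le, ht.2.le⟩
    constructor
    · rcases hzt.1.lt_or_eq with h | h
      · exact h
      · exfalso; rw [← h, hFa] at hFzt; exact absurd hFzt.symm ht.1.ne'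
    · rcases hzt.2.lt_or_eq with h | h
      · exact h
      · exfalso; rw [h] at hFzt; exact absurd hFzt ht.2.ne'
  -- monotone on Ioo 0 T
  have hmono : MonotoneOn z (Ioo 0 T) := by
    intro s hs t ht hst
    obtain ⟨hzs, hFs⟩ := hP s ⟨hs.1.le, hs.2.le⟩
    obtain ⟨hzt, hFt⟩ := hP t ⟨ht.1.le, ht.2.le⟩
    by_contra h
    push_neg at h
    have := hFm hzt hzs h
    rw [hFs, hFt] at this
    exact absurd hst (not_le.2 this)
  -- image contains Ioo a b
  have himg : Ioo a b ⊆ z '' Ioo 0 T := by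
    intro x hx
    have hx' : x ∈ Icc a b := ⟨hx.1.le, hx.2.le⟩
    refine ⟨F x, ⟨?_, ?_⟩, hzF x hx'⟩
    · have := hFm haI hx' hx.1; rwa [hFa] at this
    · exact hFm hx' hbI hx.2
  have hcont : ∀ t ∈ Ioo 0 T, ContinuousAt z t := fun t ht =>
    continuousAt_of_monotoneOn_of_image_mem_nhds hmono (Ioo_mem_nhds ht.1 ht.2)
      (mem_of_superset (isOpen_Ioo.mem_nhds (hin t ht)) himg)
  -- derivative in the interior
  have hderiv_in : ∀ t ∈ Ioo 0 T, HasDerivAt z (Real.sqrt (W (z t))) t := by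
    intro t ht
    obtain ⟨hza, hzb⟩ := hin t ht
    have hF' : HasDerivAt F ((Real.sqrt (W (z t)))⁻¹) (z t) :=
      prim_hasDerivAt hab hWc hWnn hzeros hint haI hza hzb
    have hne : (Real.sqrt (W (z t)))⁻¹ ≠ 0 :=
      (inv_pos.2 (sqrtW_pos hWnn hzeros hza hzb)).ne'
    have hinv : ∀ᶠ y in 𝓝 t, F (z y) = y := by
      filter_upwards [Ioo_mem_nhds ht.1 ht.2] with y hy
      exact (hP y ⟨hy.1.le, hy.2.le⟩).2
    have := HasDerivAt.of_local_left_inverse (hcont t ht) hF' hne hinv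
    rwa [inv_inv] at this
  refine ⟨z, hmem, hz0, ?_, T, hT0.le, hzT⟩
  intro t ht
  rcases lt_trichotomy t T with htT | htT | htT
  · rcases eq_or_lt_of_le (mem_Ici.1 ht) with h0 | h0
    · -- t = 0 : derivative zero from the right
      subst h0
      rw [hz0, hWa, Real.sqrt_zero, hasDerivWithinAt_iff_tendsto_slope, Ici_sdiff_left,
        Metric.tendsto_nhdsWithin_nhds]
      intro ε hε
      obtain ⟨δ', hδ'pos, hδ'b, hlow⟩ := low_a hab hWc hWnn hzeros hint (half_pos hε)
      have haδI : a + δ' ∈ Icc a b := ⟨by linarith, hδ'b.le⟩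
      refine ⟨F (a + δ'),
        f_integral_pos hab hWnn hzeros hint haI haδI (by linarith), ?_⟩
      intro x hx hdx
      have hx0 : (0:ℝ) < x := hx
      rw [Real.dist_eq, sub_zero, abs_of_pos hx0] at hdx
      have hδT : F (a + δ') ≤ T := hFm.monotoneOn haδI hbI hδ'b.le
      have hxT : x ≤ T := le_trans hdx.le hδT
      obtain ⟨hzx, hFzx⟩ := hP x ⟨hx0.le, hxT⟩
      have hup : z x ≤ a + δ' := by
        by_contra h
        push_neg at h
        have h2 := hFm haδI hzx h
        rw [hFzx] at h2
        linarith
      have h3 : z x - a ≤ ε/2 * F (z x) := hlow (z x) ⟨hzx.1, hup⟩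
      rw [hFzx] at h3
      rw [Real.dist_eq, sub_zero, slope_def_field, hz0, sub_zero,
        abs_of_nonneg (div_nonneg (by linarith [hzx.1] : (0:ℝ) ≤ z x - a) hx0.le)]
      have h6 : (z x - a)/x ≤ ε/2 := (div_le_iff₀ hx0).2 (by linarith)
      linarith
    · exact (hderiv_in t ⟨h0, htT⟩).hasDerivWithinAt
  · -- t = T
    subst htT
    rw [hzT, hWb, Real.sqrt_zero]
    have h1c : HasDerivWithinAt z 0 (Ici T) T :=
      (hasDerivWithinAt_const T (Ici T) b).congr (fun y hy => hP4 y hy) (hP4 T le_rfl)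
    have h2c : HasDerivWithinAt z 0 (Icc 0 T) T := by
      rw [hasDerivWithinAt_iff_tendsto_slope, Icc_sdiff_right,
        Metric.tendsto_nhdsWithin_nhds]
      intro ε hε
      obtain ⟨δ', hδ'pos, hδ'a, hlowb⟩ := low_b hab hWc hWnn hzeros hint (half_pos hε)
      have hbδI : b - δ' ∈ Icc a b := ⟨hδ'a.le, by linarith⟩
      have hFlt : F (b - δ') < T := hFm hbδI hbI (by linarith)
      refine ⟨T - F (b - δ'), by linarith, ?_⟩
      intro x hx hdx
      have hxT : x < T := hx.2
      rw [Real.dist_eq, abs_of_neg (by linarith : x - T < 0)] at hdx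
      obtain ⟨hzx, hFzx⟩ := hP x ⟨hx.1, hxT.le⟩
      have hlo : b - δ' ≤ z x := by
        by_contra h
        push_neg at h
        have h2 := hFm hzx hbδI h
        rw [hFzx] at h2
        linarith
      have h3 : b - z x ≤ ε/2 * ∫ s in (z x)..b, (Real.sqrt (W s))⁻¹ :=
        hlowb (z x) ⟨hlo, hzx.2⟩
      have h4 : F (z x) + (∫ s in (z x)..b, (Real.sqrt (W s))⁻¹) = T :=
        intervalIntegral.integral_add_adjacent_intervals
          (f_int hab hint haI hzx) (f_int hab hint hzx hbI)
      rw [hFzx] at h4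
      have h5 : (∫ s in (z x)..b, (Real.sqrt (W s))⁻¹) = T - x := by linarith
      rw [h5] at h3
      rw [Real.dist_eq, sub_zero, slope_def_field, hzT,
        show z x - b = -(b - z x) by ring, show x - T = -(T - x) by ring,
        neg_div_neg_eq,
        abs_of_nonneg (div_nonneg (by linarith [hzx.2] : (0:ℝ) ≤ b - z x)
          (by linarith : (0:ℝ) ≤ T - x))]
      have h6 : (b - z x)/(T - x) ≤ ε/2 := (div_le_iff₀ (by linarith)).2 (by linarith)
      linarith
    exact (h2c.union h1c).mono (fun u hu => (le_total u T).imp (fun h => ⟨hu, h⟩) id)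
  · -- t > T : z is constant b near t
    have hev : z =ᶠ[𝓝 t] fun _ => b := by
      filter_upwards [Ioi_mem_nhds htT] with y hy
      exact hP4 y (le_of_lt hy)
    have hd : HasDerivAt z 0 t := by
      have := (hasDerivAt_const t b).congr_of_eventuallyEq hev
      exact this
    have hzt : z t = b := hP4 t htT.le
    rw [hzt, hWb, Real.sqrt_zero]
    exact hd.hasDerivWithinAt

end CPU5

theorem cauchy_problem_uniqueness_iff (W : ℝ → ℝ) (a b α : ℝ)
    (hab : a < b) (hα : α ∈ Icc a b)
    (hWc : Continuous W) (hWnn : ∀ x, 0 ≤ W x)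
    (hzeros : ∀ x, W x = 0 ↔ x = a ∨ x = b)
    (hint : IntervalIntegrable (fun s => (Real.sqrt (W s))⁻¹) volume a b) :
    (∀ z₁ z₂ : ℝ → ℝ,
      ((∀ t ∈ Ici (0:ℝ), z₁ t ∈ Icc a b) ∧ z₁ 0 = α ∧
        (∀ t ∈ Ici (0:ℝ), HasDerivWithinAt z₁ (Real.sqrt (W (z₁ t))) (Ici 0) t)) →
      ((∀ t ∈ Ici (0:ℝ), z₂ t ∈ Icc a b) ∧ z₂ 0 = α ∧
        (∀ t ∈ Ici (0:ℝ), HasDerivWithinAt z₂ (Real.sqrt (W (z₂ t))) (Ici 0) t)) →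
      ∀ t ∈ Ici (0:ℝ), z₁ t = z₂ t) ↔ a < α := by
  constructor
  · intro H
    by_contra haα
    have hαa : α = a := le_antisymm (not_lt.1 haα) hα.1
    obtain ⟨z, hz1, hz0, hz', T, hT, hzT⟩ :=
      CPU5.exists_second_sol hab hWc hWnn hzeros hint
    have hWa : W a = 0 := (hzeros a).2 (Or.inl rfl)
    have hconst : ∀ t ∈ Ici (0:ℝ), HasDerivWithinAt (fun _ => a)
        (Real.sqrt (W ((fun _ => a) t))) (Ici 0) t := by
      intro t ht
      simp only [hWa, Real.sqrt_zero]
      exact hasDerivWithinAt_const t (Ici 0) a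
    have hfin := H (fun _ => a) z
      ⟨fun t _ => left_mem_Icc.2 hab.le, hαa.symm, hconst⟩
      ⟨hz1, by rw [hz0, hαa], hz'⟩ T hT
    rw [hzT] at hfin
    exact absurd hfin hab.ne
  · intro haα z₁ z₂ h1 h2 t ht
    obtain ⟨h11, h12, h13⟩ := h1
    obtain ⟨h21, h22, h23⟩ := h2
    have ht' : (0:ℝ) ≤ t := ht
    have e1 := CPU4.keylemma hab hWc hWnn hzeros hint hα haα h11 h12 h13 ht'
    have e2 := CPU4.keylemma hab hWc hWnn hzeros hint hα haα h21 h22 h23 ht'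
    exact (CPU2.prim_strictMonoOn hab hWnn hzeros hint hα).injOn
      (h11 t ht) (h21 t ht) (e1.trans e2.symm)
end

section
/- Every minimizer of G_ε^(0) with boundary values α_ε, β_ε satisfies the energy bound min G_ε^(0) ≤ ε ω₁ (d_W(α_ε, b) + d_W(β_ε, b)), where ω₁ = max_{[0,T]} ω and d_W is the geodesic distance induced by 2√W. -/
open Real Set Filter Topology MeasureTheory intervalIntegral

/-- Admissible class: `H¹(0,T)` functions with prescribed boundary values. -/
def Adm (T αv βv : ℝ) (v : ℝ → ℝ) : Prop :=
  ContinuousOn v (Icc 0 T) ∧ DifferentiableOn ℝ v (Ioo 0 T) ∧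
  IntervalIntegrable (fun t => (deriv v t) ^ 2) volume 0 T ∧
  v 0 = αv ∧ v T = βv

/-- The one-dimensional weighted Cahn--Hilliard energy. -/
noncomputable def En (W ω : ℝ → ℝ) (ε T : ℝ) (v : ℝ → ℝ) : ℝ :=
  ∫ t in (0:ℝ)..T, (W (v t) + ε ^ 2 * (deriv v t) ^ 2) * ω t

/-- The geodesic distance induced by `2√W`. -/
noncomputable def dW (W : ℝ → ℝ) (r s : ℝ) : ℝ :=
  |∫ ρ in r..s, 2 * Real.sqrt (W ρ)|

lemma ae_ne_pt (b : ℝ) : ∀ᵐ z : ℝ ∂volume, z ≠ b := by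
  have h : volume ({b} : Set ℝ) = 0 := Real.volume_singleton
  rw [ae_iff]
  convert h using 2
  ext z; simp

lemma profile (W : ℝ → ℝ) (a b ε α : ℝ) (hab : a < b) (hε : 0 < ε)
    (hWc : Continuous W) (hWnn : ∀ x, 0 ≤ W x)
    (hzeros : ∀ x, W x = 0 ↔ x = a ∨ x = b)
    (hint : IntervalIntegrable (fun s => (Real.sqrt (W s))⁻¹) volume a b)
    (hα : α ∈ Icc a b) :
    ∃ w : ℝ → ℝ, Continuous w ∧ w 0 = α ∧
      (∀ t, ε * ∫ s in α..b, (Real.sqrt (W s))⁻¹ ≤ t → w t = b) ∧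
      (∀ t, w t ∈ Icc a b) ∧
      (∀ t, 0 < t → HasDerivAt w (Real.sqrt (W (w t)) / ε) t) := by
  set f : ℝ → ℝ := fun s => (Real.sqrt (W s))⁻¹ with hf
  have hWb : W b = 0 := (hzeros b).2 (Or.inr rfl)
  have hfnn : ∀ s, 0 ≤ f s := fun s => inv_nonneg.2 (Real.sqrt_nonneg _)
  have hWpos : ∀ x ∈ Ioo a b, 0 < W x := by
    intro x hx
    rcases (hWnn x).lt_or_eq with h | h
    · exact h
    · rcases (hzeros x).1 h.symm with rfl | rfl
      · exact absurd hx.1 (lt_irrefl _)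
      · exact absurd hx.2 (lt_irrefl _)
  have hfpos : ∀ x ∈ Ioo a b, 0 < f x := fun x hx =>
    inv_pos.2 (Real.sqrt_pos.2 (hWpos x hx))
  have hmem : ∀ {x}, x ∈ Icc α b → x ∈ Icc a b := fun {x} h => ⟨hα.1.trans h.1, h.2⟩
  have hint' : ∀ x ∈ Icc a b, ∀ y ∈ Icc a b, IntervalIntegrable f volume x y := by
    intro x hx y hy
    refine hint.mono_set ?_
    rw [uIcc_of_le hab.le]
    exact uIcc_subset_Icc hx hy
  set τ : ℝ → ℝ := fun s => ε * ∫ ρ in α..s, f ρ with hτ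
  set L : ℝ := τ b with hLdef
  have hτα : τ α = 0 := by simp [hτ]
  have hτadd : ∀ x ∈ Icc α b, ∀ y ∈ Icc α b, τ y = τ x + ε * ∫ ρ in x..y, f ρ := by
    intro x hx y hy
    have h1 : IntervalIntegrable f volume α x := hint' α (hmem ⟨le_rfl, hα.2⟩) x (hmem hx)
    have h2 : IntervalIntegrable f volume x y := hint' x (hmem hx) y (hmem hy)
    rw [hτ]
    simp only
    rw [← mul_add, integral_add_adjacent_intervals h1 h2]
  have hτmono : StrictMonoOn τ (Icc α b) := by
    intro x hx y hy hxy
    have hpos : 0 < ∫ ρ in x..y, f ρ := by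
      apply intervalIntegral_pos_of_pos_on (hint' x (hmem hx) y (hmem hy)) _ hxy
      intro z hz
      exact hfpos z ⟨(hα.1.trans hx.1).trans_lt hz.1, hz.2.trans_le hy.2⟩
    have := hτadd x hx y hy
    nlinarith
  have hτmonoOn : MonotoneOn τ (Icc α b) := hτmono.monotoneOn
  have hτnn : ∀ x ∈ Icc α b, 0 ≤ τ x := by
    intro x hx
    rw [← hτα]
    exact hτmonoOn ⟨le_rfl, hα.2⟩ hx hx.1
  have hbmem : b ∈ Icc α b := ⟨hα.2, le_rfl⟩
  have hαmem : α ∈ Icc α b := ⟨le_rfl, hα.2⟩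
  have hL0 : 0 ≤ L := hτnn b hbmem
  have hτcont : ContinuousOn τ (Icc α b) := by
    have hIcc : IntegrableOn f (uIcc α b) volume := by
      rw [uIcc_of_le hα.2, integrableOn_Icc_iff_integrableOn_Ioc]
      exact ((intervalIntegrable_iff_integrableOn_Ioc_of_le hα.2).1
        (hint' α (hmem hαmem) b (hmem hbmem)))
    have := (continuousOn_primitive_interval hIcc)
    rw [uIcc_of_le hα.2] at this
    exact continuousOn_const.mul this
  set S : ℝ → Set ℝ := fun t => insert α {x | x ∈ Icc α b ∧ τ x ≤ t} with hS
  set w : ℝ → ℝ := fun t => sSup (S t) with hw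
  have hSb : ∀ t, ∀ x ∈ S t, x ≤ b := by
    rintro t x (rfl | ⟨hx, _⟩)
    · exact hα.2
    · exact hx.2
  have hSne : ∀ t, (S t).Nonempty := fun t => ⟨α, mem_insert _ _⟩
  have hSbdd : ∀ t, BddAbove (S t) := fun t => ⟨b, hSb t⟩
  have hwle : ∀ t, w t ≤ b := fun t => csSup_le (hSne t) (hSb t)
  have hwge : ∀ t, α ≤ w t := fun t => le_csSup (hSbdd t) (mem_insert _ _)
  have hwIcc : ∀ t, w t ∈ Icc α b := fun t => ⟨hwge t, hwle t⟩
  have hwmono : Monotone w := by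
    intro s t hst
    apply csSup_le_csSup (hSbdd t) (hSne s)
    rintro x (rfl | ⟨hx, hτx⟩)
    · exact mem_insert _ _
    · exact Or.inr ⟨hx, hτx.trans hst⟩
  have hτeqα : ∀ x ∈ Icc α b, τ x ≤ 0 → x = α := by
    intro x hx h0
    by_contra hne
    have : α < x := lt_of_le_of_ne hx.1 (Ne.symm hne)
    have := hτmono hαmem hx this
    rw [hτα] at this
    linarith
  have hw0 : w 0 = α := by
    apply le_antisymm _ (hwge 0)
    apply csSup_le (hSne 0)
    rintro x (rfl | ⟨hx, hτx⟩)
    · exact le_rfl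
    · exact (hτeqα x hx hτx).le
  have hwb : ∀ t, L ≤ t → w t = b := by
    intro t ht
    exact le_antisymm (hwle t) (le_csSup (hSbdd t) (Or.inr ⟨hbmem, ht⟩))
  have hSclosed : ∀ t, IsClosed (S t) := by
    intro t
    have h1 : IsClosed {x | x ∈ Icc α b ∧ τ x ≤ t} := by
      have h2 := hτcont.preimage_isClosed_of_isClosed isClosed_Icc (isClosed_Iic (a := t))
      have h3 : {x | x ∈ Icc α b ∧ τ x ≤ t} = Icc α b ∩ τ ⁻¹' Iic t := by
        ext x; simp [Set.mem_inter_iff, Set.mem_preimage, Set.mem_Iic]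
      rw [h3]; exact h2
    have h4 : S t = {α} ∪ {x | x ∈ Icc α b ∧ τ x ≤ t} := Set.insert_eq _ _
    rw [h4]
    exact isClosed_singleton.union h1
  have hτw : ∀ t, 0 ≤ t → t ≤ L → τ (w t) = t := by
    intro t ht0 htL
    have hmemS : w t ∈ S t := (hSclosed t).csSup_mem (hSne t) (hSbdd t)
    have hle : τ (w t) ≤ t := by
      rcases hmemS with h | ⟨_, h⟩
      · rw [h, hτα]; exact ht0
      · exact h
    rcases hle.lt_or_eq with hlt | heq
    · exfalso
      have hwtb : w t < b := by
        rcases (hwle t).lt_or_eq with h | h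
        · exact h
        · rw [h] at hlt; rw [← hLdef] at hlt; linarith
      have hev : ∀ᶠ x in 𝓝 (w t), x ∈ Icc α b → τ x < t := by
        have := hτcont (w t) (hwIcc t)
        have h2 : ∀ᶠ x in 𝓝[Icc α b] (w t), τ x < t := this (Iio_mem_nhds hlt)
        rwa [eventually_nhdsWithin_iff] at h2
      have hmemIoc : Ioc (w t) b ∈ 𝓝[>] (w t) := Ioc_mem_nhdsGT_of_mem ⟨le_rfl, hwtb⟩
      have hev' : ∀ᶠ x in 𝓝[>] (w t), x ∈ Icc α b → τ x < t :=
        hev.filter_mono nhdsWithin_le_nhds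
      obtain ⟨x, hx1, hx2⟩ := (hev'.and hmemIoc).exists
      have hxIcc : x ∈ Icc α b := ⟨(hwge t).trans hx2.1.le, hx2.2⟩
      have : x ∈ S t := Or.inr ⟨hxIcc, (hx1 hxIcc).le⟩
      exact absurd (le_csSup (hSbdd t) this) (not_le.2 hx2.1)
    · exact heq
  have hwsurj : ∀ x ∈ Icc α b, w (τ x) = x := by
    intro x hx
    have h1 : 0 ≤ τ x := hτnn x hx
    have h2 : τ x ≤ L := hτmonoOn hx hbmem hx.2
    have h3 : τ (w (τ x)) = τ x := hτw (τ x) h1 h2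
    exact hτmono.injOn (hwIcc (τ x)) hx h3
  have hwcont : Continuous w := by
    rw [continuous_iff_continuousAt]
    intro p
    rw [continuousAt_iff_continuous_left_right]
    constructor
    · by_cases hp : w p = α
      · have hc : ContinuousWithinAt (fun _ : ℝ => α) (Iic p) p := continuousWithinAt_const
        exact hc.congr (fun y hy => le_antisymm (hp ▸ hwmono hy) (hwge y)) hp
      · have hαlt : α < w p := lt_of_le_of_ne (hwge p) (Ne.symm hp)
        apply continuousWithinAt_left_of_monotoneOn_of_exists_between
          (fun x _ y _ hxy => hwmono hxy) (univ_mem)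
        intro q hq
        obtain ⟨y, hy1, hy2⟩ := exists_between (max_lt hq hαlt : max q α < w p)
        have hyIcc : y ∈ Icc α b := ⟨(le_max_right q α).trans hy1.le, hy2.le.trans (hwle p)⟩
        refine ⟨τ y, trivial, ?_⟩
        rw [hwsurj y hyIcc]
        exact ⟨(le_max_left q α).trans_lt hy1, hy2⟩
    · by_cases hp : w p = b
      · have hc : ContinuousWithinAt (fun _ : ℝ => b) (Ici p) p := continuousWithinAt_const
        exact hc.congr (fun y hy => le_antisymm (hwle y) (hp ▸ hwmono hy)) hp
      · have hblt : w p < b := lt_of_le_of_ne (hwle p) hp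
        apply continuousWithinAt_right_of_monotoneOn_of_exists_between
          (fun x _ y _ hxy => hwmono hxy) (univ_mem)
        intro q hq
        obtain ⟨y, hy1, hy2⟩ := exists_between (lt_min hq hblt : w p < min q b)
        have hyIcc : y ∈ Icc α b := ⟨(hwge p).trans hy1.le, (hy2.trans_le (min_le_right q b)).le⟩
        refine ⟨τ y, trivial, ?_⟩
        rw [hwsurj y hyIcc]
        exact ⟨hy1, hy2.trans_le (min_le_left q b)⟩
  refine ⟨w, hwcont, hw0, fun t ht => hwb t ht, fun t => hmem (hwIcc t), ?_⟩
  intro t ht0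
  rcases lt_trichotomy t L with htL | htL | htL
  · -- 0 < t < L : inverse function
    have hwt : w t ∈ Ioo α b := by
      have h1 : τ (w t) = t := hτw t ht0.le htL.le
      constructor
      · rcases (hwge t).lt_or_eq with h | h
        · exact h
        · exfalso; rw [← h, hτα] at h1; linarith
      · rcases (hwle t).lt_or_eq with h | h
        · exact h
        · exfalso; rw [h] at h1; rw [← hLdef] at h1; linarith
    have hwtab : w t ∈ Ioo a b := ⟨hα.1.trans_lt hwt.1, hwt.2⟩
    have hWt : 0 < W (w t) := hWpos _ hwtab
    have hsq : 0 < Real.sqrt (W (w t)) := Real.sqrt_pos.2 hWt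
    have hfm : Measurable f := ((Real.continuous_sqrt.comp hWc).measurable).inv
    have hτd : HasDerivAt τ (ε * f (w t)) (w t) := by
      have hinner : HasDerivAt (fun s => ∫ ρ in α..s, f ρ) (f (w t)) (w t) := by
        apply integral_hasDerivAt_right
          (hint' α (hmem hαmem) (w t) (hmem (hwIcc t)))
          (hfm.aestronglyMeasurable.stronglyMeasurableAtFilter)
        exact ((Real.continuous_sqrt.comp hWc).continuousAt).inv₀ (ne_of_gt hsq)
      exact hinner.const_mul ε
    have hne : ε * f (w t) ≠ 0 :=
      mul_ne_zero (ne_of_gt hε) (ne_of_gt (inv_pos.2 hsq))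
    have hlocinv : ∀ᶠ y in 𝓝 t, τ (w y) = y :=
      Filter.eventually_of_mem (Ioo_mem_nhds ht0 htL) (fun y hy => hτw y hy.1.le hy.2.le)
    have hder := HasDerivAt.of_local_left_inverse (hwcont.continuousAt) hτd hne hlocinv
    refine hder.congr_deriv ?_
    rw [hf]
    simp only
    rw [mul_inv, inv_inv, div_eq_mul_inv, mul_comm]
  · -- t = L : derivative zero
    have hwL : w t = b := hwb t htL.ge
    have : Real.sqrt (W (w t)) / ε = 0 := by rw [hwL, hWb, Real.sqrt_zero, zero_div]
    rw [this]
    rw [hasDerivAt_iff_isLittleO]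
    rw [Asymptotics.isLittleO_iff]
    intro c hc
    -- choose η from continuity of W at b
    have hWcb : ContinuousAt W b := hWc.continuousAt
    obtain ⟨η, hη, hWsmall⟩ := Metric.continuousAt_iff.1 hWcb ((c * ε) ^ 2) (by positivity)
    obtain ⟨γ₀, hγ₀, hwnear⟩ := Metric.continuousAt_iff.1 hwcont.continuousAt η hη
    set γ := min γ₀ t with hγdef
    have hγ : 0 < γ := lt_min hγ₀ ht0
    filter_upwards [Metric.ball_mem_nhds t hγ] with y hy
    simp only [smul_zero, sub_zero, Real.norm_eq_abs]
    rcases le_or_gt t y with hty | hyt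
    · rw [hwb y (htL ▸ hty), hwL, sub_self, abs_zero]
      positivity
    · -- y < t = L
      have hyb : dist y t < γ₀ := lt_of_lt_of_le (Metric.mem_ball.1 hy) (min_le_left _ _)
      have hy0 : 0 < y := by
        have := Metric.mem_ball.1 hy
        rw [Real.dist_eq, abs_sub_lt_iff] at this
        have := this.2
        have hγt : γ ≤ t := min_le_right _ _
        linarith
      set x := w y with hxdef
      have hτx : τ x = y := hτw y hy0.le (hyt.le.trans htL.le)
      have hxb : x < b := by
        rcases (hwle y).lt_or_eq with h | h
        · exact h
        · exfalso; rw [← hxdef] at h; rw [h] at hτx; rw [← hLdef, ← htL] at hτx; linarith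
      have hxa : a < x := by
        have : α < x := by
          rcases (hwge y).lt_or_eq with h | h
          · exact h
          · exfalso; rw [← hxdef] at h; rw [← h, hτα] at hτx; linarith
        exact hα.1.trans_lt this
      -- lower bound on f on [x, b)
      have hxη : b - η < x := by
        have := hwnear hyb
        rw [Real.dist_eq, hwL, abs_sub_lt_iff] at this
        linarith [this.2]
      have hlow : ∀ z, x ≤ z → z < b → (c * ε)⁻¹ ≤ f z := by
        intro z hz1 hz2
        have hza : a < z := lt_of_lt_of_le hxa hz1
        have hWz : 0 < W z := hWpos z ⟨hza, hz2⟩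
        have hWzsmall : W z < (c * ε) ^ 2 := by
          have : dist z b < η := by
            rw [Real.dist_eq, abs_sub_lt_iff]
            constructor <;> nlinarith
          have h6 := hWsmall this
          rw [Real.dist_eq, hWb, sub_zero] at h6
          calc W z ≤ |W z| := le_abs_self _
          _ < (c*ε)^2 := h6
        have hsz : Real.sqrt (W z) ≤ c * ε := by
          rw [show (c*ε)^2 = (c*ε)*(c*ε) by ring] at hWzsmall
          have := Real.sqrt_le_sqrt hWzsmall.le
          rwa [Real.sqrt_mul_self (by positivity : (0:ℝ) ≤ c * ε)] at this
        exact inv_anti₀ (Real.sqrt_pos.2 hWz) hsz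
      -- integral bound
      have hxIcc : x ∈ Icc α b := hwIcc y
      have hintxb : IntervalIntegrable f volume x b := hint' x (hmem hxIcc) b (hmem hbmem)
      have hIbound : (b - x) * (c * ε)⁻¹ ≤ ∫ ρ in x..b, f ρ := by
        have hconst : (∫ ρ in x..b, (c * ε)⁻¹) = (b - x) * (c * ε)⁻¹ := by
          rw [intervalIntegral.integral_const, smul_eq_mul]
        rw [← hconst]
        apply integral_mono_ae_restrict hxb.le intervalIntegrable_const hintxb
        apply (ae_restrict_iff' measurableSet_Icc).2
        filter_upwards [ae_ne_pt b] with z hz hzIcc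
        exact hlow z hzIcc.1 (lt_of_le_of_ne hzIcc.2 hz)
      have hLy : t - y = ε * ∫ ρ in x..b, f ρ := by
        have h5 := hτadd x hxIcc b hbmem
        rw [← hLdef, ← htL] at h5
        rw [h5, hτx]; ring
      have hkey : b - x ≤ c * (t - y) := by
        have h1 : ε * ((b - x) * (c * ε)⁻¹) ≤ t - y := by
          rw [hLy]
          exact mul_le_mul_of_nonneg_left hIbound hε.le
        have h7 : ε * ((b - x) * (c * ε)⁻¹) = (b - x) / c := by
          field_simp
        rw [h7] at h1
        rw [div_le_iff₀ hc] at h1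
        linarith [h1]
      rw [hwL]
      rw [abs_of_nonpos (by linarith : x - b ≤ 0), abs_of_nonpos (by linarith : y - t ≤ 0)]
      linarith
  · -- t > L : constant
    have hev : ∀ᶠ y in 𝓝 t, w y = b :=
      Filter.eventually_of_mem (Ioi_mem_nhds htL) (fun y hy => hwb y hy.le)
    have : HasDerivAt w 0 t := by
      apply HasDerivAt.congr_of_eventuallyEq (hasDerivAt_const t b)
      exact hev
    convert this using 1
    rw [hwb t htL.le, hWb, Real.sqrt_zero, zero_div]

theorem one_dim_minimizer_energy_bound (W ω : ℝ → ℝ) (a b T ε αε βε : ℝ)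
    (hab : a < b) (hT : 0 < T) (hε : 0 < ε)
    (hWc : Continuous W) (hWnn : ∀ x, 0 ≤ W x)
    (hzeros : ∀ x, W x = 0 ↔ x = a ∨ x = b)
    (hint : IntervalIntegrable (fun s => (Real.sqrt (W s))⁻¹) volume a b)
    (hωc : ContinuousOn ω (Icc 0 T)) (hωpos : ∀ t ∈ Icc 0 T, 0 < ω t)
    (hαε : αε ∈ Icc a b) (hβε : βε ∈ Icc a b)
    (hfit : 2 * ε * ∫ s in a..b, (Real.sqrt (W s))⁻¹ < T) :
    ∀ v, Adm T αε βε v → (∀ u, Adm T αε βε u → En W ω ε T v ≤ En W ω ε T u) →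
      En W ω ε T v ≤ ε * sSup (ω '' Icc 0 T) * (dW W αε b + dW W βε b) := by
  intro v hv hmin
  have hfnn : ∀ s, 0 ≤ (Real.sqrt (W s))⁻¹ := fun s => inv_nonneg.2 (Real.sqrt_nonneg _)
  set ω₁ := sSup (ω '' Icc 0 T) with hω₁
  have hbddω : BddAbove (ω '' Icc 0 T) := (isCompact_Icc.image_of_continuousOn hωc).bddAbove
  have hωle : ∀ t ∈ Icc (0:ℝ) T, ω t ≤ ω₁ := fun t ht => le_csSup hbddω (mem_image_of_mem ω ht)
  obtain ⟨w₁, hw1c, hw1z, hw1b, hw1r, hw1d⟩ := profile W a b ε αε hab hε hWc hWnn hzeros hint hαε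
  obtain ⟨w₂, hw2c, hw2z, hw2b, hw2r, hw2d⟩ := profile W a b ε βε hab hε hWc hWnn hzeros hint hβε
  set L1 := ε * ∫ s in αε..b, (Real.sqrt (W s))⁻¹ with hL1
  set L2 := ε * ∫ s in βε..b, (Real.sqrt (W s))⁻¹ with hL2
  have hintsub : ∀ x ∈ Icc a b, ∀ y ∈ Icc a b,
      IntervalIntegrable (fun s => (Real.sqrt (W s))⁻¹) volume x y := by
    intro x hx y hy
    refine hint.mono_set ?_
    rw [uIcc_of_le hab.le]
    exact uIcc_subset_Icc hx hy
  have habIcc : a ∈ Icc a b := ⟨le_rfl, hab.le⟩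
  have hbIcc : b ∈ Icc a b := ⟨hab.le, le_rfl⟩
  have hL1nn : 0 ≤ L1 :=
    mul_nonneg hε.le (intervalIntegral.integral_nonneg hαε.2 (fun x _ => hfnn x))
  have hL2nn : 0 ≤ L2 :=
    mul_nonneg hε.le (intervalIntegral.integral_nonneg hβε.2 (fun x _ => hfnn x))
  have hsplit1 : (∫ s in αε..b, (Real.sqrt (W s))⁻¹) ≤ ∫ s in a..b, (Real.sqrt (W s))⁻¹ := by
    have h1 := hintsub a habIcc αε hαε
    have h2 := hintsub αε hαε b hbIcc
    have h3 := integral_add_adjacent_intervals h1 h2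
    have h4 : 0 ≤ ∫ s in a..αε, (Real.sqrt (W s))⁻¹ :=
      intervalIntegral.integral_nonneg hαε.1 (fun x _ => hfnn x)
    linarith
  have hsplit2 : (∫ s in βε..b, (Real.sqrt (W s))⁻¹) ≤ ∫ s in a..b, (Real.sqrt (W s))⁻¹ := by
    have h1 := hintsub a habIcc βε hβε
    have h2 := hintsub βε hβε b hbIcc
    have h3 := integral_add_adjacent_intervals h1 h2
    have h4 : 0 ≤ ∫ s in a..βε, (Real.sqrt (W s))⁻¹ :=
      intervalIntegral.integral_nonneg hβε.1 (fun x _ => hfnn x)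
    linarith
  have hLT : L1 + L2 < T := by
    have : L1 + L2 ≤ 2 * ε * ∫ s in a..b, (Real.sqrt (W s))⁻¹ := by
      rw [hL1, hL2]
      nlinarith [hsplit1, hsplit2, hε.le]
    linarith
  set c := (L1 + (T - L2)) / 2 with hc
  have hL1c : L1 < c := by rw [hc]; linarith
  have hcT2 : c < T - L2 := by rw [hc]; linarith
  have h0c : 0 < c := lt_of_le_of_lt hL1nn hL1c
  have hcT : c < T := by linarith
  set u := fun t => if t ≤ c then w₁ t else w₂ (T - t) with hu
  have huc : u c = b := by rw [hu]; simp only [if_pos le_rfl]; exact hw1b c hL1c.le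
  have hu0 : u 0 = αε := by rw [hu]; simp only [if_pos h0c.le]; exact hw1z
  have huT : u T = βε := by
    rw [hu]; simp only [if_neg (not_le.2 hcT)]; rw [sub_self]; exact hw2z
  have hur : ∀ t, u t ∈ Icc a b := by
    intro t
    rw [hu]
    by_cases h : t ≤ c
    · simp only [if_pos h]; exact hw1r t
    · simp only [if_neg h]; exact hw2r (T - t)
  have humid : ∀ y ∈ Ioo L1 (T - L2), u y = b := by
    intro y hy
    rw [hu]
    by_cases h : y ≤ c
    · simp only [if_pos h]; exact hw1b y hy.1.le
    · simp only [if_neg h]; exact hw2b (T - y) (by linarith [hy.2])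
  have hucont : Continuous u := by
    rw [continuous_iff_continuousAt]
    intro t
    rcases lt_trichotomy t c with h | h | h
    · have hev : u =ᶠ[𝓝 t] w₁ :=
        Filter.eventually_of_mem (Iio_mem_nhds h) (fun y hy => by
          rw [hu]; simp only [if_pos (le_of_lt (mem_Iio.1 hy))])
      exact hw1c.continuousAt.congr hev.symm
    · have hev : u =ᶠ[𝓝 t] fun _ => b := by
        apply Filter.eventually_of_mem (Ioo_mem_nhds (h ▸ hL1c) (h ▸ hcT2))
        intro y hy
        exact humid y hy
      exact continuousAt_const.congr hev.symm
    · have hev : u =ᶠ[𝓝 t] fun y => w₂ (T - y) :=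
        Filter.eventually_of_mem (Ioi_mem_nhds h) (fun y hy => by
          rw [hu]; simp only [if_neg (not_le.2 (mem_Ioi.1 hy))])
      exact ((hw2c.comp (continuous_const.sub continuous_id)).continuousAt).congr hev.symm
  have hud : ∀ t ∈ Ioo (0:ℝ) T, HasDerivAt u
      (if t ≤ c then Real.sqrt (W (u t)) / ε else -(Real.sqrt (W (u t)) / ε)) t := by
    intro t ht
    rcases lt_trichotomy t c with h | h | h
    · have hev : u =ᶠ[𝓝 t] w₁ :=
        Filter.eventually_of_mem (Iio_mem_nhds h) (fun y hy => by
          rw [hu]; simp only [if_pos (le_of_lt (mem_Iio.1 hy))])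
      have hd := (hw1d t ht.1).congr_of_eventuallyEq hev
      rw [if_pos h.le]
      have : u t = w₁ t := by rw [hu]; simp only [if_pos h.le]
      rw [this]
      exact hd
    · have hev : u =ᶠ[𝓝 t] fun _ => b := by
        apply Filter.eventually_of_mem (Ioo_mem_nhds (h ▸ hL1c) (h ▸ hcT2))
        intro y hy
        exact humid y hy
      have hd := (hasDerivAt_const t b).congr_of_eventuallyEq hev
      have hub : u t = b := by rw [h]; exact huc
      rw [if_pos h.le, hub, (hzeros b).2 (Or.inr rfl), Real.sqrt_zero, zero_div]
      exact hd
    · have hev : u =ᶠ[𝓝 t] fun y => w₂ (T - y) :=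
        Filter.eventually_of_mem (Ioi_mem_nhds h) (fun y hy => by
          rw [hu]; simp only [if_neg (not_le.2 (mem_Ioi.1 hy))])
      have hinner : HasDerivAt (fun y : ℝ => T - y) (-1) t := by
        simpa using (hasDerivAt_id t).const_sub T
      have houter : HasDerivAt w₂ (Real.sqrt (W (w₂ (T - t))) / ε) (T - t) :=
        hw2d (T - t) (by linarith [ht.2])
      have hcomp := HasDerivAt.comp t houter hinner
      have hd := hcomp.congr_of_eventuallyEq hev
      rw [if_neg (not_le.2 h)]
      have hut : u t = w₂ (T - t) := by rw [hu]; simp only [if_neg (not_le.2 h)]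
      rw [hut]
      refine hd.congr_deriv ?_
      ring
  have hd2 : ∀ t ∈ Ioo (0:ℝ) T, (deriv u t) ^ 2 = W (u t) / ε ^ 2 := by
    intro t ht
    rw [(hud t ht).deriv]
    split_ifs with h
    · rw [div_pow, Real.sq_sqrt (hWnn _)]
    · rw [neg_sq, div_pow, Real.sq_sqrt (hWnn _)]
  have hgcont : Continuous fun t => W (u t) / ε ^ 2 := (hWc.comp hucont).div_const _
  have hder_int : IntervalIntegrable (fun t => (deriv u t) ^ 2) volume 0 T := by
    have hgint : IntervalIntegrable (fun t => W (u t) / ε ^ 2) volume 0 T :=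
      hgcont.intervalIntegrable _ _
    rw [intervalIntegrable_iff_integrableOn_Ioc_of_le hT.le] at hgint ⊢
    apply hgint.congr
    apply (ae_restrict_iff' measurableSet_Ioc).2
    filter_upwards [ae_ne_pt T] with t hne ht
    exact (hd2 t ⟨ht.1, lt_of_le_of_ne ht.2 hne⟩).symm
  have hAdm : Adm T αε βε u :=
    ⟨hucont.continuousOn, fun t ht => ((hud t ht).differentiableAt).differentiableWithinAt,
      hder_int, hu0, huT⟩
  -- energy of u
  have hcm1 : Continuous fun t => 2 * W (u t) := continuous_const.mul (hWc.comp hucont)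
  have hEn1 : En W ω ε T u = ∫ t in (0:ℝ)..T, 2 * W (u t) * ω t := by
    apply intervalIntegral.integral_congr_ae
    filter_upwards [ae_ne_pt T] with t hne ht
    rw [uIoc_of_le hT.le] at ht
    have ht' : t ∈ Ioo (0:ℝ) T := ⟨ht.1, lt_of_le_of_ne ht.2 hne⟩
    rw [hd2 t ht']
    have hε2 : ε ^ 2 * (W (u t) / ε ^ 2) = W (u t) := by
      field_simp
    rw [hε2]; ring
  have hint2 : IntervalIntegrable (fun t => 2 * W (u t) * ω t) volume 0 T := by
    apply ContinuousOn.intervalIntegrable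
    rw [uIcc_of_le hT.le]
    exact hcm1.continuousOn.mul hωc
  have hint3 : IntervalIntegrable (fun t => ω₁ * (2 * W (u t))) volume 0 T :=
    (continuous_const.mul hcm1).intervalIntegrable _ _
  have hEn2 : (∫ t in (0:ℝ)..T, 2 * W (u t) * ω t) ≤ ∫ t in (0:ℝ)..T, ω₁ * (2 * W (u t)) := by
    apply integral_mono_on hT.le hint2 hint3
    intro t ht
    have h1 := hωle t ht
    have h2 : 0 ≤ 2 * W (u t) := by linarith [hWnn (u t)]
    calc 2 * W (u t) * ω t ≤ 2 * W (u t) * ω₁ := mul_le_mul_of_nonneg_left h1 h2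
    _ = ω₁ * (2 * W (u t)) := mul_comm _ _
  have hEn3 : (∫ t in (0:ℝ)..T, ω₁ * (2 * W (u t))) = ω₁ * ∫ t in (0:ℝ)..T, 2 * W (u t) :=
    intervalIntegral.integral_const_mul _ _
  -- FTC on [0, c]
  have h2c : Continuous fun ρ => 2 * Real.sqrt (W ρ) :=
    continuous_const.mul (Real.continuous_sqrt.comp hWc)
  set Φ₁ : ℝ → ℝ := fun x => ∫ ρ in αε..x, 2 * Real.sqrt (W ρ) with hΦ₁
  set Φ₂ : ℝ → ℝ := fun x => ∫ ρ in βε..x, 2 * Real.sqrt (W ρ) with hΦ₂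
  have hΦ1d : ∀ x, HasDerivAt Φ₁ (2 * Real.sqrt (W x)) x := fun x =>
    integral_hasDerivAt_right (h2c.intervalIntegrable _ _)
      (h2c.measurable.aestronglyMeasurable.stronglyMeasurableAtFilter) h2c.continuousAt
  have hΦ2d : ∀ x, HasDerivAt Φ₂ (2 * Real.sqrt (W x)) x := fun x =>
    integral_hasDerivAt_right (h2c.intervalIntegrable _ _)
      (h2c.measurable.aestronglyMeasurable.stronglyMeasurableAtFilter) h2c.continuousAt
  have hΦ1cont : Continuous Φ₁ :=
    continuous_iff_continuousAt.2 fun x => (hΦ1d x).differentiableAt.continuousAt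
  have hΦ2cont : Continuous Φ₂ :=
    continuous_iff_continuousAt.2 fun x => (hΦ2d x).differentiableAt.continuousAt
  have hu'1 : ∀ t ∈ Ioo (0:ℝ) c, HasDerivAt u (Real.sqrt (W (u t)) / ε) t := by
    intro t ht
    have := hud t ⟨ht.1, ht.2.trans hcT⟩
    rwa [if_pos ht.2.le] at this
  have hu'2 : ∀ t ∈ Ioo c T, HasDerivAt u (-(Real.sqrt (W (u t)) / ε)) t := by
    intro t ht
    have := hud t ⟨h0c.trans ht.1, ht.2⟩
    rwa [if_neg (not_le.2 ht.1)] at this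
  have hF1d : ∀ t ∈ Ioo (0:ℝ) c, HasDerivAt (fun t => ε * Φ₁ (u t)) (2 * W (u t)) t := by
    intro t ht
    have h := ((hΦ1d (u t)).comp t (hu'1 t ht)).const_mul ε
    refine h.congr_deriv ?_
    have hkey : ε * (2 * Real.sqrt (W (u t)) * (Real.sqrt (W (u t)) / ε)) =
        2 * (Real.sqrt (W (u t)) * Real.sqrt (W (u t))) := by
      field_simp
    rw [hkey, Real.mul_self_sqrt (hWnn _)]
  have hF2d : ∀ t ∈ Ioo c T, HasDerivAt (fun t => -(ε * Φ₂ (u t))) (2 * W (u t)) t := by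
    intro t ht
    have h := (((hΦ2d (u t)).comp t (hu'2 t ht)).const_mul ε).neg
    refine h.congr_deriv ?_
    have hkey : -(ε * (2 * Real.sqrt (W (u t)) * (-(Real.sqrt (W (u t)) / ε)))) =
        2 * (Real.sqrt (W (u t)) * Real.sqrt (W (u t))) := by
      field_simp
    rw [hkey, Real.mul_self_sqrt (hWnn _)]
  have hI1 : (∫ t in (0:ℝ)..c, 2 * W (u t)) = ε * Φ₁ b := by
    have := integral_eq_sub_of_hasDeriv_right_of_le h0c.le
      ((continuous_const.mul (hΦ1cont.comp hucont)).continuousOn)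
      (fun t ht => (hF1d t ht).hasDerivWithinAt)
      (hcm1.intervalIntegrable _ _)
    rw [this]
    have hΦα : Φ₁ αε = 0 := intervalIntegral.integral_same
    simp only [Function.comp_apply, Pi.neg_apply, Pi.mul_apply, huc, hu0, hΦα]
    ring
  have hI2 : (∫ t in c..T, 2 * W (u t)) = ε * Φ₂ b := by
    have := integral_eq_sub_of_hasDeriv_right_of_le hcT.le
      ((continuous_const.mul (hΦ2cont.comp hucont)).neg.continuousOn)
      (fun t ht => (hF2d t ht).hasDerivWithinAt)
      (hcm1.intervalIntegrable _ _)
    rw [this]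
    have hΦβ : Φ₂ βε = 0 := intervalIntegral.integral_same
    simp only [Function.comp_apply, Pi.neg_apply, Pi.mul_apply, huc, huT, hΦβ]
    ring
  have hItot : (∫ t in (0:ℝ)..T, 2 * W (u t)) = ε * Φ₁ b + ε * Φ₂ b := by
    rw [← integral_add_adjacent_intervals (hcm1.intervalIntegrable 0 c)
      (hcm1.intervalIntegrable c T), hI1, hI2]
  have hA : dW W αε b = Φ₁ b := by
    rw [dW, hΦ₁]
    exact abs_of_nonneg (intervalIntegral.integral_nonneg hαε.2
      (fun x _ => by positivity))
  have hB : dW W βε b = Φ₂ b := by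
    rw [dW, hΦ₂]
    exact abs_of_nonneg (intervalIntegral.integral_nonneg hβε.2
      (fun x _ => by positivity))
  calc En W ω ε T v ≤ En W ω ε T u := hmin u hAdm
  _ = ∫ t in (0:ℝ)..T, 2 * W (u t) * ω t := hEn1
  _ ≤ ∫ t in (0:ℝ)..T, ω₁ * (2 * W (u t)) := hEn2
  _ = ω₁ * ∫ t in (0:ℝ)..T, 2 * W (u t) := hEn3
  _ = ω₁ * (ε * Φ₁ b + ε * Φ₂ b) := by rw [hItot]
  _ = ε * ω₁ * (dW W αε b + dW W βε b) := by rw [hA, hB]; ring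
end

section
/- Every minimizer v_ε of G_ε^(0) satisfies the first integral identity v_ε'(t)² = (W(v_ε(t)) + δ_ε(t))/ε² for all t ∈ [0,T], where δ_ε(t) = (1/ω(t)) [ω(0)(ε² v_ε'(0)² − W(v_ε(0))) − ε ∫_0^t ((1/ε)W(v_ε) + ε(v_ε')²) ω' ds]. -/
open Real Set Filter Topology MeasureTheory intervalIntegral

theorem first_integral_identity (W ω ω' v v' v'' : ℝ → ℝ) (T ε : ℝ)
    (hT : 0 < T) (hε : 0 < ε)
    (hW : Differentiable ℝ W)
    (hωd : ∀ t ∈ Icc (0:ℝ) T, HasDerivWithinAt ω (ω' t) (Icc 0 T) t)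
    (hω'c : ContinuousOn ω' (Icc 0 T))
    (hωpos : ∀ t ∈ Icc (0:ℝ) T, 0 < ω t)
    (hvd : ∀ t ∈ Icc (0:ℝ) T, HasDerivWithinAt v (v' t) (Icc 0 T) t)
    (hv'd : ∀ t ∈ Icc (0:ℝ) T, HasDerivWithinAt v' (v'' t) (Icc 0 T) t)
    (hv''c : ContinuousOn v'' (Icc 0 T))
    (hEL : ∀ t ∈ Icc (0:ℝ) T,
      v'' t = deriv W (v t) / (2 * ε ^ 2) - (ω' t / ω t) * v' t) :
    ∀ t ∈ Icc (0:ℝ) T,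
      (v' t) ^ 2 =
        (W (v t) +
          (1 / ω t) * (ω 0 * (ε ^ 2 * (v' 0) ^ 2 - W (v 0)) -
            ε * ∫ s in (0:ℝ)..t, ((1 / ε) * W (v s) + ε * (v' s) ^ 2) * ω' s)) / ε ^ 2 := by
  intro t ht
  set H : ℝ → ℝ := fun x => ω x * (ε ^ 2 * (v' x) ^ 2 - W (v x)) with hH
  set g : ℝ → ℝ := fun x => (W (v x) + ε ^ 2 * (v' x) ^ 2) * ω' x with hg
  have hεne : (ε : ℝ) ≠ 0 := ne_of_gt hε
  -- derivative of H within Icc 0 T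
  have hHderiv : ∀ x ∈ Icc (0:ℝ) T, HasDerivWithinAt H (-(g x)) (Icc 0 T) x := by
    intro x hx
    have hωx : ω x ≠ 0 := ne_of_gt (hωpos x hx)
    have hWv : HasDerivWithinAt (fun y => W (v y)) (deriv W (v x) * v' x) (Icc 0 T) x :=
      ((hW (v x)).hasDerivAt.comp_hasDerivWithinAt x (hvd x hx))
    have hv'sq : HasDerivWithinAt (fun y => ε ^ 2 * (v' y) ^ 2)
        (ε ^ 2 * (2 * v' x * v'' x)) (Icc 0 T) x := by
      have := ((hv'd x hx).pow 2)
      simpa [mul_comm, mul_assoc, mul_left_comm] using this.const_mul (ε ^ 2)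
    have hin : HasDerivWithinAt (fun y => ε ^ 2 * (v' y) ^ 2 - W (v y))
        (ε ^ 2 * (2 * v' x * v'' x) - deriv W (v x) * v' x) (Icc 0 T) x :=
      hv'sq.sub hWv
    have h := (hωd x hx).mul hin
    have key : ω' x * (ε ^ 2 * (v' x) ^ 2 - W (v x)) +
        ω x * (ε ^ 2 * (2 * v' x * v'' x) - deriv W (v x) * v' x) = -(g x) := by
      rw [hEL x hx]
      field_simp [hg]
      ring
    have h2 : HasDerivWithinAt H (ω' x * (ε ^ 2 * (v' x) ^ 2 - W (v x)) +
        ω x * (ε ^ 2 * (2 * v' x * v'' x) - deriv W (v x) * v' x)) (Icc 0 T) x := h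
    rw [key] at h2
    exact h2
  have ht0 : (0:ℝ) ≤ t := ht.1
  have htT : t ≤ T := ht.2
  have hsub : Icc (0:ℝ) t ⊆ Icc 0 T := Icc_subset_Icc le_rfl htT
  -- continuity of g on Icc 0 T
  have hvc : ContinuousOn v (Icc (0:ℝ) T) := fun x hx => (hvd x hx).continuousWithinAt
  have hv'c : ContinuousOn v' (Icc (0:ℝ) T) := fun x hx => (hv'd x hx).continuousWithinAt
  have hgc : ContinuousOn g (Icc (0:ℝ) T) := by
    apply ContinuousOn.mul _ hω'c
    exact (hW.continuous.comp_continuousOn hvc).add ((hv'c.pow 2).const_smul (ε ^ 2))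
  have hgint : IntervalIntegrable g MeasureTheory.volume 0 t :=
    (hgc.mono (by rw [uIcc_of_le ht0]; exact hsub)).intervalIntegrable
  have hgint' : IntervalIntegrable (fun x => -(g x)) MeasureTheory.volume 0 t := hgint.neg
  have hHc : ContinuousOn H (Icc (0:ℝ) t) :=
    fun x hx => ((hHderiv x (hsub hx)).continuousWithinAt).mono hsub
  have hHd : ∀ x ∈ Ioo (0:ℝ) t, HasDerivWithinAt H (-(g x)) (Ioi x) x := by
    intro x hx
    have hxIcc : x ∈ Icc (0:ℝ) T := ⟨le_of_lt hx.1, le_of_lt (lt_of_lt_of_le hx.2 htT)⟩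
    apply (hHderiv x hxIcc).mono_of_mem_nhdsWithin
    rw [mem_nhdsWithin]
    exact ⟨Iio T, isOpen_Iio, lt_of_lt_of_le hx.2 htT,
      fun y hy => ⟨le_trans hxIcc.1 (le_of_lt hy.2), le_of_lt hy.1⟩⟩
  have hFTC := intervalIntegral.integral_eq_sub_of_hasDeriv_right_of_le ht0 hHc hHd hgint'
  rw [intervalIntegral.integral_neg] at hFTC
  -- rewrite the integral in the goal
  have hIeq : (ε * ∫ s in (0:ℝ)..t, ((1 / ε) * W (v s) + ε * (v' s) ^ 2) * ω' s)
      = ∫ s in (0:ℝ)..t, g s := by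
    rw [← intervalIntegral.integral_const_mul]
    apply intervalIntegral.integral_congr
    intro s _
    have h1 : ε * ((1 / ε) * W (v s) + ε * (v' s) ^ 2) = W (v s) + ε ^ 2 * (v' s) ^ 2 := by
      field_simp
    simp only [hg, ← h1]
    ring
  rw [hIeq]
  have hInt : (∫ s in (0:ℝ)..t, g s) = H 0 - H t := by linarith [hFTC]
  rw [hInt]
  have hωt : ω t ≠ 0 := ne_of_gt (hωpos t ht)
  have hω0 : ω 0 ≠ 0 := ne_of_gt (hωpos 0 ⟨le_rfl, le_of_lt hT⟩)
  simp only [hH]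
  field_simp
  ring
end

section
/- Assume (i) either α ≥ α_− > a, or ω'(0) > 0, (ii) the weight oscillation ω₁ − ω₀ is sufficiently small (resp. ω(t) ≥ ω(0) − (κ₀/2)t holds for all t). Then the constant function b is the unique minimizer of the first-order one-dimensional limiting functional G^(1)(v) = (C_W/(b−a)) ∫_I ω d|Dv| + d_W(v(0),α)ω(0) + d_W(v(T),b)ω(T) over v ∈ BV(I; {a,b}). -/
open Real Set Filter Topology MeasureTheory intervalIntegral

/-- Energy of a `BV((0,T);{a,b})` competitor, represented by its finitely many
jump points `tj : Fin n → ℝ` and its value `s₀ ∈ {a,b}` on the first piece: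
each interior jump costs `dW a b` weighted by `ω` at the jump point, and the
boundary traces `s₀` and `a + b - s₀` (if `n` is odd) pay the geodesic distance
to the boundary data `α` resp. `b`. -/
noncomputable def G1 (W ω : ℝ → ℝ) (a b α T : ℝ) (n : ℕ) (tj : Fin n → ℝ) (s₀ : ℝ) : ℝ :=
  dW W a b * (∑ i, ω (tj i)) + dW W s₀ α * ω 0 +
    dW W (if Even n then s₀ else a + b - s₀) b * ω T

theorem constant_b_unique_minimizer_1d (W : ℝ → ℝ) (a b α αm κ₀ : ℝ)
    (hab : a < b) (hα : α ∈ Icc a b) (hαm : αm ∈ Ioo a b) (hκ₀ : κ₀ < 0)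
    (hWc : Continuous W) (hWnn : ∀ x, 0 ≤ W x)
    (hzeros : ∀ x, W x = 0 ↔ x = a ∨ x = b) :
    ∃ δ > 0, ∀ T : ℝ, 0 < T → ∀ ω : ℝ → ℝ,
      ContinuousOn ω (Icc 0 T) → (∀ t ∈ Icc 0 T, 0 < ω t) → ω 0 = 1 →
      ((αm ≤ α ∧ sSup (ω '' Icc 0 T) - sInf (ω '' Icc 0 T) < δ) ∨
        (∀ t ∈ Icc 0 T, ω 0 - κ₀ / 2 * t ≤ ω t)) →
      ∀ (n : ℕ) (tj : Fin n → ℝ) (s₀ : ℝ),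
        (s₀ = a ∨ s₀ = b) → StrictMono tj → (∀ i, tj i ∈ Ioo 0 T) →
        ¬(n = 0 ∧ s₀ = b) →
        dW W α b * ω 0 < G1 W ω a b α T n tj s₀ := by
  have hf : Continuous (fun ρ => 2 * Real.sqrt (W ρ)) :=
    continuous_const.mul (Real.continuous_sqrt.comp hWc)
  have hint : ∀ r s : ℝ, IntervalIntegrable (fun ρ => 2 * Real.sqrt (W ρ)) volume r s :=
    fun r s => hf.intervalIntegrable r s
  have hnn : ∀ x : ℝ, 0 ≤ 2 * Real.sqrt (W x) := fun x => by positivity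
  have hDnn : ∀ r s : ℝ, r ≤ s → dW W r s = ∫ ρ in r..s, 2 * Real.sqrt (W ρ) := by
    intro r s hrs
    exact abs_of_nonneg (intervalIntegral.integral_nonneg hrs (fun x _ => hnn x))
  have hadd : ∀ r s t : ℝ, r ≤ s → s ≤ t → dW W r t = dW W r s + dW W s t := by
    intro r s t h1 h2
    rw [hDnn r t (h1.trans h2), hDnn r s h1, hDnn s t h2,
      ← intervalIntegral.integral_add_adjacent_intervals (hint r s) (hint s t)]
  have hDge : ∀ r s : ℝ, 0 ≤ dW W r s := fun r s => abs_nonneg _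
  have hpos : ∀ r, a < r → r ≤ b → 0 < dW W a r := by
    intro r har hrb
    rw [hDnn a r har.le]
    apply intervalIntegral.intervalIntegral_pos_of_pos_on (hint a r)
    · intro x hx
      have hW : 0 < W x := by
        rcases (hWnn x).lt_or_eq with h | h
        · exact h
        · exfalso
          rcases (hzeros x).mp h.symm with rfl | rfl
          · exact lt_irrefl _ hx.1
          · exact absurd hrb (not_le.mpr hx.2)
      positivity
    · exact har
  set d := dW W a b with hdd
  set m := dW W a αm with hmm
  have hd : 0 < d := hpos b hab le_rfl
  have hm : 0 < m := hpos αm hαm.1 hαm.2.le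
  have hmd : m ≤ d := by
    have := hadd a αm b hαm.1.le hαm.2.le
    have := hDge αm b
    linarith
  refine ⟨m / (2 * d), by positivity, ?_⟩
  intro T hT ω hωc hωpos hω0 hhyp n tj s₀ hs₀ htjmono htjmem hne
  set g := dW W a α with hgg
  set e := dW W α b with hee
  have hge : g + e = d := (hadd a α b hα.1 hα.2).symm
  have hg0 : 0 ≤ g := hDge a α
  have he0 : 0 ≤ e := hDge α b
  have hωTpos : 0 < ω T := hωpos T ⟨hT.le, le_rfl⟩
  -- bound on ω at points of Icc 0 T, in case 1
  have hlow : (αm ≤ α ∧ sSup (ω '' Icc 0 T) - sInf (ω '' Icc 0 T) < m / (2 * d)) →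
      ∀ t ∈ Icc 0 T, 1 - m / (2 * d) < ω t := by
    rintro ⟨_, hosc⟩ t ht
    have hcomp : IsCompact (ω '' Icc 0 T) := (isCompact_Icc).image_of_continuousOn hωc
    have h1 : ω 0 ≤ sSup (ω '' Icc 0 T) :=
      le_csSup hcomp.bddAbove ⟨0, ⟨le_rfl, hT.le⟩, rfl⟩
    have h2 : sInf (ω '' Icc 0 T) ≤ ω t := csInf_le hcomp.bddBelow ⟨t, ht, rfl⟩
    rw [hω0] at h1
    linarith
  have hgm : αm ≤ α → m ≤ g := by
    intro h
    have := hadd a αm α hαm.1.le h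
    have := hDge αm α
    linarith
  rcases Nat.eq_zero_or_pos n with rfl | hn
  · -- no jumps: s₀ must be a
    rcases hs₀ with rfl | rfl
    · simp only [G1, Finset.univ_eq_empty, Finset.sum_empty, mul_zero, zero_add,
        hω0, mul_one]
      rw [if_pos Even.zero, ← hgg, ← hdd]
      -- goal : e < g + d * ω T
      rcases hhyp with h1 | h2
      · have hωT : 1 - m / (2 * d) < ω T := hlow h1 T ⟨hT.le, le_rfl⟩
        have hmg : m ≤ g := hgm h1.1
        have : d * (1 - m / (2 * d)) ≤ d * ω T := by nlinarith
        have hdm : d * (m / (2 * d)) = m / 2 := by field_simp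
        nlinarith
      · have hωT : ω 0 - κ₀ / 2 * T ≤ ω T := h2 T ⟨hT.le, le_rfl⟩
        rw [hω0] at hωT
        have h1T : 1 < ω T := by nlinarith
        nlinarith
    · exact absurd ⟨rfl, rfl⟩ hne
  · -- at least one jump
    set i₀ : Fin n := ⟨0, hn⟩
    set t₀ := tj i₀ with ht₀def
    have ht₀ : t₀ ∈ Ioo 0 T := htjmem i₀
    have hsum : ω t₀ ≤ ∑ i, ω (tj i) := by
      apply Finset.single_le_sum (f := fun i => ω (tj i))
        (fun i _ => (hωpos (tj i) (Ioo_subset_Icc_self (htjmem i))).le) (Finset.mem_univ i₀)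
    have hG1 : d * ω t₀ ≤ G1 W ω a b α T n tj s₀ := by
      have h1 : 0 ≤ dW W s₀ α * ω 0 := by rw [hω0]; simpa using hDge s₀ α
      have h2 : 0 ≤ dW W (if Even n then s₀ else a + b - s₀) b * ω T :=
        mul_nonneg (hDge _ _) hωTpos.le
      have h3 : d * ω t₀ ≤ d * ∑ i, ω (tj i) := mul_le_mul_of_nonneg_left hsum hd.le
      simp only [G1]
      linarith
    rw [hω0, mul_one]
    rcases hhyp with h1 | h2
    · have hωt : 1 - m / (2 * d) < ω t₀ := hlow h1 t₀ (Ioo_subset_Icc_self ht₀)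
      have hmg : m ≤ g := hgm h1.1
      have hdm : d * (m / (2 * d)) = m / 2 := by field_simp
      nlinarith
    · have hωt : ω 0 - κ₀ / 2 * t₀ ≤ ω t₀ := h2 t₀ (Ioo_subset_Icc_self ht₀)
      rw [hω0] at hωt
      have h1t : 1 < ω t₀ := by nlinarith [ht₀.1]
      nlinarith
end
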